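/- arXiv:1212.1298 — 12 statements merged into one kernel-verified Lean document; each statement's English description precedes it below -/
import Mathlib

section
/- Let G and H be finite groups and let ψ : G → H be a subgroup-preserving bijection. If H is abelian group representable for n, then G is abelian group representable for n; moreover, if H is uniformly abelian group representable for n via a finite abelian group A, then G is uniformly abelian group representable for n via the same A. -/
/-- `(A, As)` represents `(G, Gs)`: for every nonempty subset `S` of indices,
the index of the intersection of the `Gs i`, `i ∈ S`, in `G` equals the index of the
intersection of the `As i`, `i ∈ S`, in `A`. -/
def Represents {G A : Type*} [Group G] [Group A] {n : ℕ}
    (Gs : Fin n → Subgroup G) (As : Fin n → Subgroup A) : Prop :=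
  ∀ S : Finset (Fin n), S.Nonempty →
    (⨅ i ∈ S, Gs i).index = (⨅ i ∈ S, As i).index

/-- `G` is abelian group representable for `n`: for every choice of `n` subgroups of `G`
there is a finite abelian group `A` with `n` subgroups representing them. -/
def AbelianGroupRepresentable (G : Type*) [Group G] (n : ℕ) : Prop :=
  ∀ Gs : Fin n → Subgroup G,
    ∃ (A : Type) (_ : CommGroup A) (_ : Fintype A) (As : Fin n → Subgroup A),
      Represents Gs As

/-- If `L` is the image of `K` under a bijection `ψ`, they have the same index. -/
lemma index_eq_of_image {G H : Type} [Group G] [Fintype G] [Group H] [Fintype H]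
    (ψ : G → H) (hbij : Function.Bijective ψ) (K : Subgroup G) (L : Subgroup H)
    (hLK : (L : Set H) = ψ '' (K : Set G)) : K.index = L.index := by
  have hGH : Nat.card G = Nat.card H := Nat.card_eq_of_bijective ψ hbij
  have hcard : Nat.card L = Nat.card K := by
    have h1 : Nat.card (L : Set H) = Nat.card (K : Set G) := by
      rw [hLK, Nat.card_image_of_injective hbij.1]
    simpa using h1
  have h1 : K.index * Nat.card K = Nat.card G := Subgroup.index_mul_card K
  have h2 : L.index * Nat.card L = Nat.card H := Subgroup.index_mul_card L
  have hpos : 0 < Nat.card K := Nat.card_pos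
  apply Nat.eq_of_mul_eq_mul_right hpos
  rw [h1, hGH, ← h2, hcard]

theorem stmt_0 (G H : Type) [Group G] [Fintype G] [Group H] [Fintype H]
    (ψ : G → H) (hbij : Function.Bijective ψ)
    (hsub : ∀ K : Subgroup G, ∃ L : Subgroup H, (L : Set H) = ψ '' (K : Set G))
    (n : ℕ) :
    (AbelianGroupRepresentable H n → AbelianGroupRepresentable G n) ∧
    (∀ (A : Type) (_ : CommGroup A) (_ : Fintype A),
      (∀ Hs : Fin n → Subgroup H, ∃ As : Fin n → Subgroup A, Represents Hs As) →
      (∀ Gs : Fin n → Subgroup G, ∃ As : Fin n → Subgroup A, Represents Gs As)) := by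
  -- For any family Gs, build the image family Hs and show the index of each
  -- nonempty intersection agrees.
  have main : ∀ Gs : Fin n → Subgroup G, ∃ Hs : Fin n → Subgroup H,
      ∀ S : Finset (Fin n), S.Nonempty →
        (⨅ i ∈ S, Gs i).index = (⨅ i ∈ S, Hs i).index := by
    intro Gs
    choose Hs hHs using fun i => hsub (Gs i)
    refine ⟨Hs, fun S hS => ?_⟩
    apply index_eq_of_image ψ hbij
    ext h
    simp only [Subgroup.coe_iInf, Set.mem_iInter, SetLike.mem_coe, Set.mem_image]
    constructor
    · intro hh
      obtain ⟨i₀, hi₀⟩ := hS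
      have := hh i₀ hi₀
      rw [← SetLike.mem_coe, hHs i₀] at this
      obtain ⟨g₀, hg₀, hg₀eq⟩ := this
      refine ⟨g₀, ?_, hg₀eq⟩
      intro i hi
      have := hh i hi
      rw [← SetLike.mem_coe, hHs i] at this
      obtain ⟨g, hg, hgeq⟩ := this
      rwa [hbij.1 (hgeq.trans hg₀eq.symm)] at hg
    · rintro ⟨g, hg, rfl⟩
      intro i hi
      rw [← SetLike.mem_coe, hHs i]
      exact ⟨g, hg i hi, rfl⟩
  constructor
  · intro hH Gs
    obtain ⟨Hs, hHs⟩ := main Gs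
    obtain ⟨A, hA, hF, As, hrep⟩ := hH Hs
    exact ⟨A, hA, hF, As, fun S hS => (hHs S hS).trans (hrep S hS)⟩
  · intro A hA hF hrep Gs
    obtain ⟨Hs, hHs⟩ := main Gs
    obtain ⟨As, hAs⟩ := hrep Hs
    exact ⟨As, fun S hS => (hHs S hS).trans (hAs S hS)⟩
end

section
/- Let G be a finite group and H a finite abelian group, and suppose there exists a subgroup-preserving bijection ψ : G → H. Then for every n ≥ 1, G is uniformly abelian group representable for n; in fact, for every choice of subgroups G_1, …, G_n of G, the group H with subgroups ψ(G_1), …, ψ(G_n) represents (G, G_1, …, G_n). -/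
theorem stmt_1 (G H : Type) [Group G] [Fintype G] [CommGroup H] [Fintype H]
    (ψ : G → H) (hbij : Function.Bijective ψ)
    (hsub : ∀ K : Subgroup G, ∃ L : Subgroup H, (L : Set H) = ψ '' (K : Set G))
    (n : ℕ) (hn : 1 ≤ n) (Gs : Fin n → Subgroup G) :
    ∃ Hs : Fin n → Subgroup H,
      (∀ i, (Hs i : Set H) = ψ '' (Gs i : Set G)) ∧ Represents Gs Hs := by
  choose Hs hHs using fun i => hsub (Gs i)
  refine ⟨Hs, hHs, fun S hS => ?_⟩
  have hset : ((⨅ i ∈ S, Hs i : Subgroup H) : Set H) = ψ '' ((⨅ i ∈ S, Gs i : Subgroup G) : Set G) := by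
    simp only [Subgroup.coe_iInf, Set.image_iInter₂ hbij, hHs]
  have hcard : Nat.card (⨅ i ∈ S, Hs i : Subgroup H) = Nat.card (⨅ i ∈ S, Gs i : Subgroup G) := by
    have : Nat.card (⨅ i ∈ S, Hs i : Subgroup H) = Nat.card ↑(ψ '' ((⨅ i ∈ S, Gs i : Subgroup G) : Set G)) := by
      rw [← hset]; rfl
    rw [this, Nat.card_image_of_injective hbij.injective]; rfl
  have hG : Nat.card G = Nat.card H := Nat.card_eq_of_bijective ψ hbij
  have h1 := Subgroup.index_mul_card (⨅ i ∈ S, Gs i)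
  have h2 := Subgroup.index_mul_card (⨅ i ∈ S, Hs i)
  have hpos : 0 < Nat.card (⨅ i ∈ S, Gs i : Subgroup G) := Nat.card_pos
  apply Nat.eq_of_mul_eq_mul_right hpos
  rw [h1, ← hcard, h2, hG]
end

section
/- For every k ≥ 1, the map ψ from the dihedral group DihedralGroup (2^k) of order 2^{k+1} to the elementary abelian 2-group (Fin (k+1) → ZMod 2), which sends the rotation r^a (a ∈ ZMod (2^k) with binary expansion a = Σ_{i=0}^{k-1} a_i 2^i) to the vector (a_0, …, a_{k-1}, 0) and sends the reflection s·r^a to the vector (a_0, …, a_{k-1}, 1), is a subgroup-preserving bijection. -/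
/-- The map from the dihedral group of order `2^(k+1)` to the elementary abelian
`2`-group `Fin (k+1) → ZMod 2`, sending the rotation `r a` (with binary expansion
`a = Σ_{i<k} a_i 2^i`) to `(a_0, …, a_{k-1}, 0)` and the reflection `sr a` to
`(a_0, …, a_{k-1}, 1)`. -/
def dihedralToVec (k : ℕ) : DihedralGroup (2 ^ k) → (Fin (k + 1) → ZMod 2)
  | DihedralGroup.r a => fun i =>
      if (i : ℕ) < k then (((a.val / 2 ^ (i : ℕ)) % 2 : ℕ) : ZMod 2) else 0
  | DihedralGroup.sr a => fun i =>
      if (i : ℕ) < k then (((a.val / 2 ^ (i : ℕ)) % 2 : ℕ) : ZMod 2) else 1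

namespace Stmt2Aux

instance instNZ (k : ℕ) : NeZero (2 ^ k) := ⟨(Nat.two_pow_pos k).ne'⟩

/-! ### Nat bit lemmas -/

lemma div_mod_two (x i : ℕ) : x / 2 ^ i % 2 = if x.testBit i then 1 else 0 := by
  rcases Nat.mod_two_eq_zero_or_one (x / 2 ^ i) with h | h <;>
    simp [Nat.testBit_eq_decide_div_mod_eq, h]

lemma pow_dvd_iff_bits (m j : ℕ) : 2 ^ j ∣ m ↔ ∀ i < j, m.testBit i = false := by
  constructor
  · intro h i hij
    have h0 : m % 2 ^ j = 0 := Nat.eq_zero_of_dvd_of_lt ((Nat.dvd_mod_iff dvd_rfl).mpr h) (Nat.mod_lt _ (Nat.two_pow_pos j))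
    have := Nat.testBit_mod_two_pow m j i
    rw [h0, Nat.zero_testBit] at this
    simpa [hij] using this.symm
  · intro h
    have h0 : m % 2 ^ j = 0 := by
      apply Nat.eq_of_testBit_eq
      intro i
      rw [Nat.testBit_mod_two_pow, Nat.zero_testBit]
      by_cases hij : i < j
      · simp [hij, h i hij]
      · simp [hij]
    exact Nat.dvd_of_mod_eq_zero h0

lemma mod_eq_of_bits (x y j : ℕ) (h : ∀ i < j, x.testBit i = y.testBit i) :
    x % 2 ^ j = y % 2 ^ j := by
  apply Nat.eq_of_testBit_eq
  intro i
  rw [Nat.testBit_mod_two_pow, Nat.testBit_mod_two_pow]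
  by_cases hij : i < j <;> simp [hij, h]

lemma exists_lowbit (A : ℕ) (hA : A ≠ 0) :
    ∃ j, A.testBit j = true ∧ ∀ i < j, A.testBit i = false := by
  have hex : ∃ j, A.testBit j = true := by
    by_contra h
    push_neg at h
    exact hA (Nat.eq_of_testBit_eq fun i => by
      simp only [Nat.zero_testBit]
      simpa using h i)
  refine ⟨Nat.find hex, Nat.find_spec hex, fun i hi => ?_⟩
  simpa using Nat.find_min hex hi

lemma testBit_of_dvd_not_dvd {m j : ℕ} (h1 : 2 ^ j ∣ m) (h2 : ¬ 2 ^ (j + 1) ∣ m) :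
    m.testBit j = true := by
  obtain ⟨e, he⟩ := h1
  have hdiv : m / 2 ^ j = e := by rw [he]; exact Nat.mul_div_cancel_left e (Nat.two_pow_pos j)
  have he2 : e % 2 = 1 := by
    rcases Nat.mod_two_eq_zero_or_one e with h | h
    · obtain ⟨f, hf⟩ : 2 ∣ e := Nat.dvd_of_mod_eq_zero h
      refine absurd ⟨f, ?_⟩ h2
      rw [he, hf, pow_succ]
      ring
    · exact h
  rw [Nat.testBit_eq_decide_div_mod_eq, hdiv, he2]
  decide

/-! ### ZMod lemmas -/

lemma dvd_val_iff {n m : ℕ} [NeZero n] [NeZero m] (hmn : m ∣ n) (u : ZMod n) :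
    m ∣ u.val ↔ (ZMod.castHom hmn (ZMod m)) u = 0 := by
  rw [ZMod.castHom_apply, ← ZMod.natCast_val, ZMod.natCast_eq_zero_iff]

lemma castHom_natCast {n m : ℕ} [NeZero n] (hmn : m ∣ n) (A : ℕ) :
    (ZMod.castHom hmn (ZMod m)) ((A : ℕ) : ZMod n) = (A : ZMod m) := by
  rw [map_natCast]

lemma val_natCast_self {n : ℕ} [NeZero n] (u : ZMod n) : ((u.val : ℕ) : ZMod n) = u := by
  rw [ZMod.natCast_val, ZMod.cast_id]

/-- Key lemma: in `ZMod (2^k)`, if `2^j` exactly divides `c.val` and `2^j ∣ d.val`, then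
`d` is a multiple of `c`. -/
lemma mem_zmultiples_of {k : ℕ} (c d : ZMod (2 ^ k)) (j : ℕ)
    (h1 : 2 ^ j ∣ c.val) (h2 : c.val.testBit j = true) (h3 : 2 ^ j ∣ d.val) :
    d ∈ AddSubgroup.zmultiples c := by
  obtain ⟨m, hm⟩ := h1
  obtain ⟨e, he⟩ := h3
  have hmodd : m % 2 = 1 := by
    rcases Nat.mod_two_eq_zero_or_one m with h | h
    · obtain ⟨f, hf⟩ : 2 ∣ m := Nat.dvd_of_mod_eq_zero h
      have : 2 ^ (j + 1) ∣ c.val := ⟨f, by rw [hm, hf, pow_succ]; ring⟩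
      have := (pow_dvd_iff_bits _ _).1 this j (Nat.lt_succ_self j)
      rw [h2] at this
      exact absurd this (by simp)
    · exact h
  have hcop : Nat.Coprime m (2 ^ k) := by
    apply Nat.Coprime.pow_right
    rw [Nat.coprime_comm]
    exact (Nat.prime_two.coprime_iff_not_dvd).2 (by omega)
  obtain ⟨u, hu⟩ := (ZMod.isUnit_iff_coprime m (2 ^ k)).2 hcop
  rw [AddSubgroup.mem_zmultiples_iff]
  refine ⟨(((↑(u⁻¹) : ZMod (2 ^ k)) * (e : ZMod (2 ^ k))).val : ℤ), ?_⟩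
  rw [natCast_zsmul, nsmul_eq_mul, val_natCast_self]
  have hc : c = (2 ^ j : ZMod (2 ^ k)) * (u : ZMod (2 ^ k)) := by
    rw [hu]
    calc c = ((c.val : ℕ) : ZMod (2 ^ k)) := (val_natCast_self c).symm
      _ = _ := by rw [hm]; push_cast; ring
  have hd : d = (2 ^ j : ZMod (2 ^ k)) * (e : ZMod (2 ^ k)) := by
    calc d = ((d.val : ℕ) : ZMod (2 ^ k)) := (val_natCast_self d).symm
      _ = _ := by rw [he]; push_cast; ring
  rw [hc, hd]
  calc (↑(u⁻¹) : ZMod (2 ^ k)) * ↑e * ((2:ZMod (2^k)) ^ j * ↑u)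
      = (2:ZMod (2^k)) ^ j * ↑e * ((↑(u⁻¹) : ZMod (2 ^ k)) * ↑u) := by ring
    _ = (2:ZMod (2^k)) ^ j * ↑e := by rw [Units.inv_mul]; ring

/-! ### XOR on ZMod (2^k) -/

def xorZ (k : ℕ) (a b : ZMod (2 ^ k)) : ZMod (2 ^ k) :=
  ((a.val ^^^ b.val : ℕ) : ZMod (2 ^ k))

lemma xorZ_val (k : ℕ) (a b : ZMod (2 ^ k)) : (xorZ k a b).val = a.val ^^^ b.val :=
  ZMod.val_cast_of_lt (Nat.xor_lt_two_pow (ZMod.val_lt a) (ZMod.val_lt b))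

lemma xorZ_comm (k : ℕ) (a b : ZMod (2 ^ k)) : xorZ k a b = xorZ k b a := by
  rw [xorZ, xorZ, Nat.xor_comm]

lemma xorZ_zero_left (k : ℕ) (b : ZMod (2 ^ k)) : xorZ k 0 b = b := by
  rw [xorZ, ZMod.val_zero, Nat.zero_xor, val_natCast_self]

/-- The additive subgroup of indices of rotations lying in `K`. -/
def rotS (k : ℕ) (K : Subgroup (DihedralGroup (2 ^ k))) : AddSubgroup (ZMod (2 ^ k)) where
  carrier := {a | DihedralGroup.r a ∈ K}
  zero_mem' := by
    show DihedralGroup.r 0 ∈ K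
    rw [← DihedralGroup.one_def]
    exact K.one_mem
  add_mem' := by
    intro a b ha hb
    show DihedralGroup.r (a + b) ∈ K
    rw [← DihedralGroup.r_mul_r]
    exact K.mul_mem ha hb
  neg_mem' := by
    intro a ha
    show DihedralGroup.r (-a) ∈ K
    have h : (DihedralGroup.r a)⁻¹ = DihedralGroup.r (-a) := rfl
    rw [← h]
    exact K.inv_mem ha

lemma mem_rotS {k : ℕ} {K : Subgroup (DihedralGroup (2 ^ k))} {a : ZMod (2 ^ k)} :
    a ∈ rotS k K ↔ DihedralGroup.r a ∈ K := Iff.rfl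

/-- Bit `j` is the lowest bit where `a` and `b` differ; then `(b - a).val` is divisible by
`2^j` but not `2^(j+1)`. -/
lemma sub_exact_dvd {k j : ℕ} (hjk : j < k) (a b : ZMod (2 ^ k))
    (hagree : ∀ i < j, a.val.testBit i = b.val.testBit i)
    (hdiff : a.val.testBit j ≠ b.val.testBit j) :
    2 ^ j ∣ (b - a).val ∧ (b - a).val.testBit j = true := by
  haveI : NeZero (2 ^ j) := instNZ j
  haveI : NeZero (2 ^ (j + 1)) := instNZ (j + 1)
  have hmod : a.val % 2 ^ j = b.val % 2 ^ j := mod_eq_of_bits _ _ _ hagree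
  have hd1 : 2 ^ j ∣ (b - a).val := by
    rw [dvd_val_iff (pow_dvd_pow 2 hjk.le)]
    rw [map_sub]
    have ha' : (ZMod.castHom (pow_dvd_pow 2 hjk.le) (ZMod (2 ^ j))) a
        = ((a.val : ℕ) : ZMod (2 ^ j)) := by
      conv_lhs => rw [← val_natCast_self a]
      rw [map_natCast]
    have hb' : (ZMod.castHom (pow_dvd_pow 2 hjk.le) (ZMod (2 ^ j))) b
        = ((b.val : ℕ) : ZMod (2 ^ j)) := by
      conv_lhs => rw [← val_natCast_self b]
      rw [map_natCast]
    rw [ha', hb', ← ZMod.natCast_mod a.val (2 ^ j), ← ZMod.natCast_mod b.val (2 ^ j), hmod,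
      sub_self]
  refine ⟨hd1, ?_⟩
  apply testBit_of_dvd_not_dvd hd1
  -- show ¬ 2^(j+1) ∣ (b - a).val
  intro hd2
  have hjk1 : j + 1 ≤ k := hjk
  rw [dvd_val_iff (pow_dvd_pow 2 hjk1)] at hd2
  rw [map_sub] at hd2
  have ha' : (ZMod.castHom (pow_dvd_pow 2 hjk1) (ZMod (2 ^ (j + 1)))) a
      = ((a.val % 2 ^ (j + 1) : ℕ) : ZMod (2 ^ (j + 1))) := by
    conv_lhs => rw [← val_natCast_self a]
    rw [map_natCast, ZMod.natCast_mod]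
  have hb' : (ZMod.castHom (pow_dvd_pow 2 hjk1) (ZMod (2 ^ (j + 1)))) b
      = ((b.val % 2 ^ (j + 1) : ℕ) : ZMod (2 ^ (j + 1))) := by
    conv_lhs => rw [← val_natCast_self b]
    rw [map_natCast, ZMod.natCast_mod]
  rw [ha', hb'] at hd2
  have hsplitA : a.val % 2 ^ (j + 1) = a.val % 2 ^ j + 2 ^ j * (a.val / 2 ^ j % 2) := by
    rw [pow_succ]; exact Nat.mod_mul
  have hsplitB : b.val % 2 ^ (j + 1) = b.val % 2 ^ j + 2 ^ j * (b.val / 2 ^ j % 2) := by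
    rw [pow_succ]; exact Nat.mod_mul
  have hne : (2 ^ j : ZMod (2 ^ (j + 1))) ≠ 0 := by
    have : ¬ (2 ^ (j + 1) ∣ 2 ^ j) := by
      intro h
      have := Nat.le_of_dvd (Nat.two_pow_pos j) h
      have := Nat.pow_lt_pow_succ (a := 2) (by norm_num) (n := j)
      omega
    intro h0
    apply this
    rw [← ZMod.natCast_eq_zero_iff]
    push_cast
    exact h0
  rw [hsplitA, hsplitB, hmod] at hd2
  push_cast at hd2
  rcases Nat.mod_two_eq_zero_or_one (a.val / 2 ^ j) with hA | hA <;>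
    rcases Nat.mod_two_eq_zero_or_one (b.val / 2 ^ j) with hB | hB
  · exact hdiff (by rw [Nat.testBit_eq_decide_div_mod_eq, Nat.testBit_eq_decide_div_mod_eq, hA, hB])
  · rw [hA, hB] at hd2
    push_cast at hd2
    exact hne (by linear_combination hd2)
  · rw [hA, hB] at hd2
    push_cast at hd2
    exact hne (by linear_combination -hd2)
  · exact hdiff (by rw [Nat.testBit_eq_decide_div_mod_eq, Nat.testBit_eq_decide_div_mod_eq, hA, hB])

lemma lt_of_testBit_val {k : ℕ} (a : ZMod (2 ^ k)) {j : ℕ} (h : a.val.testBit j = true) :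
    j < k := by
  by_contra hjk
  push_neg at hjk
  have hlt : a.val < 2 ^ j :=
    lt_of_lt_of_le (ZMod.val_lt a) (Nat.pow_le_pow_right (by norm_num) hjk)
  rw [Nat.testBit_lt_two_pow hlt] at h
  exact absurd h (by simp)

lemma key_rot {k : ℕ} (K : Subgroup (DihedralGroup (2 ^ k))) (a b : ZMod (2 ^ k))
    (hab : DihedralGroup.r (b - a) ∈ K) :
    DihedralGroup.r (xorZ k a b) ∈ K := by
  by_cases h0 : a = b
  · subst h0
    have : xorZ k a a = 0 := by
      rw [xorZ, Nat.xor_self, Nat.cast_zero]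
    rw [this, ← DihedralGroup.one_def]
    exact K.one_mem
  · have hxne : a.val ^^^ b.val ≠ 0 := by
      intro h
      exact h0 (ZMod.val_injective _ (xor_eq_zero_iff.1 h))
    obtain ⟨j, hj1, hj2⟩ := exists_lowbit _ hxne
    have hjk : j < k := lt_of_testBit_val (xorZ k a b) (by rw [xorZ_val]; exact hj1)
    have hagree : ∀ i < j, a.val.testBit i = b.val.testBit i := by
      intro i hi
      have := hj2 i hi
      rw [Nat.testBit_xor] at this
      revert this
      cases a.val.testBit i <;> cases b.val.testBit i <;> simp
    have hdiff : a.val.testBit j ≠ b.val.testBit j := by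
      rw [Nat.testBit_xor] at hj1
      revert hj1
      cases a.val.testBit j <;> cases b.val.testBit j <;> simp
    obtain ⟨hd1, hbit⟩ := sub_exact_dvd hjk a b hagree hdiff
    have hdvd_d : 2 ^ j ∣ (xorZ k a b).val := by
      rw [xorZ_val]
      exact (pow_dvd_iff_bits _ _).2 hj2
    have hmem := mem_zmultiples_of (b - a) (xorZ k a b) j hd1 hbit hdvd_d
    have hle : AddSubgroup.zmultiples (b - a) ≤ rotS k K :=
      AddSubgroup.zmultiples_le.2 hab
    exact hle hmem

lemma key_ref {k : ℕ} (K : Subgroup (DihedralGroup (2 ^ k))) (a b : ZMod (2 ^ k))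
    (ha : DihedralGroup.r a ∈ K) (hb : DihedralGroup.sr b ∈ K) :
    DihedralGroup.sr (xorZ k a b) ∈ K := by
  by_cases h0 : a = 0
  · subst h0
    rw [xorZ_zero_left]
    exact hb
  · have hAne : a.val ≠ 0 := fun h => h0 ((ZMod.val_eq_zero a).1 h)
    obtain ⟨j, hj1, hj2⟩ := exists_lowbit _ hAne
    have hjk : j < k := lt_of_testBit_val a hj1
    haveI : NeZero (2 ^ j) := instNZ j
    have hdvd_c : 2 ^ j ∣ a.val := (pow_dvd_iff_bits _ _).2 hj2
    have hagree : ∀ i < j, (xorZ k a b).val.testBit i = b.val.testBit i := by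
      intro i hi
      rw [xorZ_val, Nat.testBit_xor, hj2 i hi, Bool.false_xor]
    have hmod : (xorZ k a b).val % 2 ^ j = b.val % 2 ^ j := mod_eq_of_bits _ _ _ hagree
    have hdvd_d : 2 ^ j ∣ (xorZ k a b - b).val := by
      rw [dvd_val_iff (pow_dvd_pow 2 hjk.le), map_sub]
      have hx' : (ZMod.castHom (pow_dvd_pow 2 hjk.le) (ZMod (2 ^ j))) (xorZ k a b)
          = (((xorZ k a b).val : ℕ) : ZMod (2 ^ j)) := by
        conv_lhs => rw [← val_natCast_self (xorZ k a b)]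
        rw [map_natCast]
      have hb' : (ZMod.castHom (pow_dvd_pow 2 hjk.le) (ZMod (2 ^ j))) b
          = ((b.val : ℕ) : ZMod (2 ^ j)) := by
        conv_lhs => rw [← val_natCast_self b]
        rw [map_natCast]
      rw [hx', hb', ← ZMod.natCast_mod (xorZ k a b).val (2 ^ j),
        ← ZMod.natCast_mod b.val (2 ^ j), hmod, sub_self]
    have hmem := mem_zmultiples_of a (xorZ k a b - b) j hdvd_c hj1 hdvd_d
    have hle : AddSubgroup.zmultiples a ≤ rotS k K := AddSubgroup.zmultiples_le.2 ha
    have hr : DihedralGroup.r (xorZ k a b - b) ∈ K := hle hmem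
    have := K.mul_mem hb hr
    rw [DihedralGroup.sr_mul_r] at this
    have heq : b + (xorZ k a b - b) = xorZ k a b := by ring
    rwa [heq] at this

/-- The "digit-wise xor" operation on the dihedral group, corresponding to addition of
vectors. -/
def xorOp (k : ℕ) : DihedralGroup (2 ^ k) → DihedralGroup (2 ^ k) → DihedralGroup (2 ^ k)
  | .r a, .r b => .r (xorZ k a b)
  | .r a, .sr b => .sr (xorZ k a b)
  | .sr a, .r b => .sr (xorZ k a b)
  | .sr a, .sr b => .r (xorZ k a b)

lemma xorOp_mem {k : ℕ} (K : Subgroup (DihedralGroup (2 ^ k))) {x y : DihedralGroup (2 ^ k)}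
    (hx : x ∈ K) (hy : y ∈ K) : xorOp k x y ∈ K := by
  rcases x with a | a <;> rcases y with b | b
  · apply key_rot
    have h := K.mul_mem (K.inv_mem hx) hy
    have hinv : (DihedralGroup.r a)⁻¹ = DihedralGroup.r (-a) := rfl
    rw [hinv, DihedralGroup.r_mul_r] at h
    rwa [show -a + b = b - a by ring] at h
  · exact key_ref K a b hx hy
  · rw [show xorOp k (DihedralGroup.sr a) (DihedralGroup.r b)
      = DihedralGroup.sr (xorZ k b a) from by rw [xorOp, xorZ_comm]]
    exact key_ref K b a hy hx
  · apply key_rot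
    have h := K.mul_mem hx hy
    rwa [DihedralGroup.sr_mul_sr] at h

lemma digit_xor (A B i : ℕ) :
    (((A ^^^ B) / 2 ^ i % 2 : ℕ) : ZMod 2)
      = ((A / 2 ^ i % 2 : ℕ) : ZMod 2) + ((B / 2 ^ i % 2 : ℕ) : ZMod 2) := by
  rw [div_mod_two, div_mod_two, div_mod_two, Nat.testBit_xor]
  cases A.testBit i <;> cases B.testBit i <;> simp <;> decide

lemma psi_add (k : ℕ) (x y : DihedralGroup (2 ^ k)) :
    dihedralToVec k x + dihedralToVec k y = dihedralToVec k (xorOp k x y) := by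
  rcases x with a | a <;> rcases y with b | b <;> funext i <;>
    simp only [dihedralToVec, xorOp, Pi.add_apply, xorZ_val] <;>
    split_ifs with hik <;>
    first
      | exact (digit_xor _ _ _).symm
      | simp
      | decide

lemma psi_one (k : ℕ) : dihedralToVec k 1 = 0 := by
  rw [DihedralGroup.one_def]
  funext i
  simp [dihedralToVec, ZMod.val_zero]

lemma digits_inj {k : ℕ} (a b : ZMod (2 ^ k))
    (h : ∀ i < k, ((a.val / 2 ^ i % 2 : ℕ) : ZMod 2) = ((b.val / 2 ^ i % 2 : ℕ) : ZMod 2)) :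
    a = b := by
  apply ZMod.val_injective
  apply Nat.eq_of_testBit_eq
  intro i
  by_cases hik : i < k
  · have hi := h i hik
    rw [div_mod_two, div_mod_two] at hi
    cases ha : a.val.testBit i <;> cases hb : b.val.testBit i <;>
      rw [ha, hb] at hi <;>
      first
        | rfl
        | (exfalso; revert hi; simp)
        | (exfalso; revert hi; decide)
  · push_neg at hik
    have hlta : a.val < 2 ^ i :=
      lt_of_lt_of_le (ZMod.val_lt a) (Nat.pow_le_pow_right (by norm_num) hik)
    have hltb : b.val < 2 ^ i :=
      lt_of_lt_of_le (ZMod.val_lt b) (Nat.pow_le_pow_right (by norm_num) hik)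
    rw [Nat.testBit_lt_two_pow hlta, Nat.testBit_lt_two_pow hltb]

lemma psi_inj (k : ℕ) : Function.Injective (dihedralToVec k) := by
  intro x y h
  have hlast := congrFun h (Fin.last k)
  have hlk : ¬ ((Fin.last k : Fin (k + 1)) : ℕ) < k := by simp
  rcases x with a | a <;> rcases y with b | b
  · congr 1
    apply digits_inj
    intro i hik
    have hi := congrFun h ⟨i, Nat.lt_succ_of_lt hik⟩
    simpa [dihedralToVec, hik] using hi
  · exfalso
    simp only [dihedralToVec, if_neg hlk] at hlast
    exact absurd hlast (by decide)
  · exfalso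
    simp only [dihedralToVec, if_neg hlk] at hlast
    exact absurd hlast (by decide)
  · congr 1
    apply digits_inj
    intro i hik
    have hi := congrFun h ⟨i, Nat.lt_succ_of_lt hik⟩
    simpa [dihedralToVec, hik] using hi

lemma psi_bij (k : ℕ) : Function.Bijective (dihedralToVec k) := by
  rw [Fintype.bijective_iff_injective_and_card]
  refine ⟨psi_inj k, ?_⟩
  rw [DihedralGroup.card]
  rw [Fintype.card_fun, ZMod.card, Fintype.card_fin]
  rw [pow_succ]
  ring

end Stmt2Aux

theorem stmt_2 (k : ℕ) (hk : 1 ≤ k) :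
    Function.Bijective (dihedralToVec k) ∧
    ∀ K : Subgroup (DihedralGroup (2 ^ k)),
      ∃ L : AddSubgroup (Fin (k + 1) → ZMod 2),
        (L : Set (Fin (k + 1) → ZMod 2)) = dihedralToVec k '' (K : Set (DihedralGroup (2 ^ k))) := by
  refine ⟨Stmt2Aux.psi_bij k, fun K => ?_⟩
  refine ⟨⟨⟨⟨dihedralToVec k '' (K : Set (DihedralGroup (2 ^ k))), ?_⟩, ?_⟩, ?_⟩, rfl⟩
  · rintro x' y' ⟨x, hx, rfl⟩ ⟨y, hy, rfl⟩
    exact ⟨Stmt2Aux.xorOp k x y, Stmt2Aux.xorOp_mem K hx hy, (Stmt2Aux.psi_add k x y).symm⟩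
  · exact ⟨1, K.one_mem, Stmt2Aux.psi_one k⟩
  · rintro x' ⟨x, hx, rfl⟩
    have hneg : -(dihedralToVec k x) = dihedralToVec k x := by
      funext i
      rw [Pi.neg_apply]
      generalize dihedralToVec k x i = z
      revert z
      decide
    rw [hneg]
    exact ⟨x, hx, rfl⟩
end

section
/- Let k ≥ 1 and let H be a subgroup of the dihedral group DihedralGroup (2^k) of order 2^{k+1}. Then H has one of the following forms: (1) H is the cyclic subgroup generated by r^{2^i} for some 0 ≤ i ≤ k, i.e. H = {r^a : a ≡ 0 mod 2^i}; (2) H is the subgroup {1, s·r^a} generated by a reflection s·r^a for some 0 ≤ a < 2^k; (3) H is generated by r^{2^i} and s·r^c for some 0 ≤ i < k and 0 ≤ c < 2^i, i.e. H = {r^a : a ≡ 0 mod 2^i} ∪ {s·r^b : b ≡ c mod 2^i}. -/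
lemma zmod_pow_addSubgroup (k : ℕ) (A : AddSubgroup (ZMod (2 ^ k))) :
    ∃ i ≤ k, ∀ a : ZMod (2 ^ k), a ∈ A ↔ a.val % 2 ^ i = 0 := by
  haveI : NeZero (2 ^ k) := ⟨pow_ne_zero k two_ne_zero⟩
  have hP : ∃ j, ((2 ^ j : ℕ) : ZMod (2 ^ k)) ∈ A ∧ j ≤ k :=
    ⟨k, by rw [ZMod.natCast_self]; exact ⟨A.zero_mem, le_refl k⟩⟩
  classical
  set i := Nat.find hP with hi
  obtain ⟨hmem, hik⟩ := Nat.find_spec hP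
  -- key: any element of A has 2^i ∣ val
  have key : ∀ a : ZMod (2 ^ k), a ∈ A → 2 ^ i ∣ a.val := by
    intro a ha
    rcases eq_or_ne a 0 with rfl | ha0
    · simp [ZMod.val_zero]
    have hv : a.val ≠ 0 := fun h => ha0 ((ZMod.val_eq_zero a).mp h)
    set j := (a.val).factorization 2 with hj
    have hdvd : 2 ^ j ∣ a.val := Nat.ordProj_dvd a.val 2
    set o := a.val / 2 ^ j with ho
    have hoval : a.val = 2 ^ j * o := by
      rw [ho, Nat.mul_div_cancel' hdvd]
    have hodd : ¬ 2 ∣ o := Nat.not_dvd_ordCompl (by norm_num) hv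
    have hcop : Nat.Coprime o (2 ^ k) := by
      apply Nat.Coprime.pow_right
      exact (Nat.prime_two.coprime_iff_not_dvd.mpr hodd).symm
    -- inverse of o mod 2^k
    set u := ZMod.unitOfCoprime o hcop with hu
    have hmem2j : ((2 ^ j : ℕ) : ZMod (2 ^ k)) ∈ A := by
      have h1 : (((u⁻¹ : (ZMod (2 ^ k))ˣ) : ZMod (2 ^ k)).val) • a ∈ A :=
        AddSubgroup.nsmul_mem A ha _
      have h2 : (((u⁻¹ : (ZMod (2 ^ k))ˣ) : ZMod (2 ^ k)).val) • a
          = ((2 ^ j : ℕ) : ZMod (2 ^ k)) := by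
        rw [nsmul_eq_mul, ZMod.natCast_val, ZMod.cast_id]
        have : a = ((2 ^ j * o : ℕ) : ZMod (2 ^ k)) := by
          rw [← hoval, ZMod.natCast_val, ZMod.cast_id]
        rw [this]
        push_cast
        have huo : ((u : (ZMod (2 ^ k))ˣ) : ZMod (2 ^ k)) = (o : ZMod (2 ^ k)) :=
          ZMod.coe_unitOfCoprime o hcop
        calc ((u⁻¹ : (ZMod (2 ^ k))ˣ) : ZMod (2 ^ k)) * ((2:ZMod (2^k)) ^ j * (o : ZMod (2^k)))
            = (((u⁻¹ : (ZMod (2 ^ k))ˣ) : ZMod (2 ^ k)) * ((u : (ZMod (2 ^ k))ˣ) : ZMod (2 ^ k))) * (2:ZMod (2^k)) ^ j := by rw [huo]; ring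
          _ = (2:ZMod (2^k)) ^ j := by rw [← Units.val_mul, inv_mul_cancel, Units.val_one, one_mul]
      rwa [h2] at h1
    have hjk : j ≤ k := by
      have : 2 ^ j ≤ a.val := Nat.le_of_dvd (Nat.pos_of_ne_zero hv) hdvd
      have h2 : a.val < 2 ^ k := ZMod.val_lt a
      have := lt_of_le_of_lt this h2
      exact le_of_lt (by exact (Nat.pow_lt_pow_iff_right (by norm_num)).mp this)
    have h_ile : i ≤ j := by
      by_contra hlt
      exact Nat.find_min hP (lt_of_not_ge hlt) ⟨hmem2j, hjk⟩
    exact dvd_trans (pow_dvd_pow 2 h_ile) hdvd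
  refine ⟨i, hik, fun a => ⟨fun ha => Nat.dvd_iff_mod_eq_zero.mp (key a ha), fun ha => ?_⟩⟩
  have hdvd : 2 ^ i ∣ a.val := Nat.dvd_of_mod_eq_zero ha
  have : a = (a.val / 2 ^ i) • ((2 ^ i : ℕ) : ZMod (2 ^ k)) := by
    rw [nsmul_eq_mul, ← Nat.cast_mul, Nat.div_mul_cancel hdvd, ZMod.natCast_val, ZMod.cast_id]
  rw [this]
  exact AddSubgroup.nsmul_mem A hmem _

theorem stmt_3 (k : ℕ) (hk : 1 ≤ k) (H : Subgroup (DihedralGroup (2 ^ k))) :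
    (∃ i ≤ k, (H : Set (DihedralGroup (2 ^ k))) =
        {x | ∃ a : ZMod (2 ^ k), x = DihedralGroup.r a ∧ a.val % 2 ^ i = 0}) ∨
    (∃ a : ZMod (2 ^ k), (H : Set (DihedralGroup (2 ^ k))) = {1, DihedralGroup.sr a}) ∨
    (∃ i < k, ∃ c < 2 ^ i, (H : Set (DihedralGroup (2 ^ k))) =
        {x | ∃ a : ZMod (2 ^ k), x = DihedralGroup.r a ∧ a.val % 2 ^ i = 0} ∪
        {x | ∃ b : ZMod (2 ^ k), x = DihedralGroup.sr b ∧ b.val % 2 ^ i = c}) := by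
  haveI : NeZero (2 ^ k) := ⟨pow_ne_zero k two_ne_zero⟩
  set R : AddSubgroup (ZMod (2 ^ k)) :=
    { carrier := {a | DihedralGroup.r a ∈ H}
      zero_mem' := by simpa [← DihedralGroup.one_def] using H.one_mem
      add_mem' := fun {a b} ha hb => by
        simpa [← DihedralGroup.r_mul_r] using H.mul_mem ha hb
      neg_mem' := fun {a} ha => by
        have : (DihedralGroup.r a)⁻¹ ∈ H := H.inv_mem ha
        exact this } with hRdef
  obtain ⟨i, hik, hR⟩ := zmod_pow_addSubgroup k R
  have hRr : ∀ a : ZMod (2 ^ k), DihedralGroup.r a ∈ H ↔ a.val % 2 ^ i = 0 := fun a => hR a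
  by_cases hs : ∃ c, DihedralGroup.sr c ∈ H
  · obtain ⟨c, hc⟩ := hs
    rcases lt_or_eq_of_le hik with hik' | hieq
    · right; right
      haveI : NeZero (2 ^ i) := ⟨pow_ne_zero i two_ne_zero⟩
      -- helper: relate mod conditions of differences
      have hmod : ∀ x y : ZMod (2 ^ k), (x - y).val % 2 ^ i = 0 ↔ x.val % 2 ^ i = y.val % 2 ^ i := by
        intro x y
        have hdvd : (2 : ℕ) ^ i ∣ 2 ^ k := pow_dvd_pow 2 hik
        have hcast : ∀ z : ZMod (2 ^ k), z.val % 2 ^ i = ((z.val : ZMod (2 ^ i))).val := by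
          intro z; rw [ZMod.val_natCast]
        rw [hcast, hcast, hcast]
        have hφ : ((x - y).val : ZMod (2 ^ i)) = ((x.val : ZMod (2 ^ i))) - ((y.val : ZMod (2 ^ i))) := by
          rw [ZMod.natCast_val, ZMod.natCast_val, ZMod.natCast_val,
            ← ZMod.castHom_apply (h := hdvd), ← ZMod.castHom_apply (h := hdvd),
            ← ZMod.castHom_apply (h := hdvd), map_sub]
        rw [hφ]
        constructor
        · intro h
          have : (x.val : ZMod (2 ^ i)) = (y.val : ZMod (2 ^ i)) := by
            have := (ZMod.val_eq_zero _).mp h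
            linear_combination this
          rw [this]
        · intro h
          have hxy : (x.val : ZMod (2 ^ i)) = (y.val : ZMod (2 ^ i)) :=
            ZMod.val_injective _ h
          rw [hxy, sub_self, ZMod.val_zero]
      refine ⟨i, hik', c.val % 2 ^ i, Nat.mod_lt _ (pow_pos two_pos i), ?_⟩
      ext x
      cases x with
      | r a =>
        simp only [Set.mem_union, Set.mem_setOf_eq, SetLike.mem_coe]
        constructor
        · intro hx
          exact Or.inl ⟨a, rfl, (hRr a).mp hx⟩
        · rintro (⟨a', ha', hcond⟩ | ⟨b, hb, _⟩)
          · cases ha'; exact (hRr a).mpr hcond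
          · exact absurd hb (by simp)
      | sr b =>
        simp only [Set.mem_union, Set.mem_setOf_eq, SetLike.mem_coe]
        constructor
        · intro hx
          refine Or.inr ⟨b, rfl, ?_⟩
          have : DihedralGroup.sr b * DihedralGroup.sr c ∈ H := H.mul_mem hx hc
          rw [DihedralGroup.sr_mul_sr] at this
          have h0 := (hRr _).mp this
          exact ((hmod c b).mp h0).symm
        · rintro (⟨a, ha, _⟩ | ⟨b', hb', hcond⟩)
          · exact absurd ha (by simp)
          · cases hb'
            have hrot : DihedralGroup.r (b - c) ∈ H := by
              apply (hRr _).mpr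
              exact (hmod b c).mpr (by rw [hcond])
            have := H.mul_mem hc hrot
            rw [DihedralGroup.sr_mul_r] at this
            simpa using this
    · -- i = k : R trivial, H = {1, sr c}
      right; left
      refine ⟨c, ?_⟩
      have hRtriv : ∀ a : ZMod (2 ^ k), DihedralGroup.r a ∈ H ↔ a = 0 := by
        intro a
        rw [hRr a, hieq, Nat.mod_eq_of_lt (ZMod.val_lt a), ZMod.val_eq_zero]
      ext x
      cases x with
      | r a =>
        simp only [Set.mem_insert_iff, Set.mem_singleton_iff, SetLike.mem_coe]
        constructor
        · intro hx
          left
          rw [(hRtriv a).mp hx, ← DihedralGroup.one_def]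
        · rintro (h1 | h2)
          · rw [h1]; exact H.one_mem
          · exact absurd h2 (by simp)
      | sr b =>
        simp only [Set.mem_insert_iff, Set.mem_singleton_iff, SetLike.mem_coe]
        constructor
        · intro hx
          right
          have : DihedralGroup.sr b * DihedralGroup.sr c ∈ H := H.mul_mem hx hc
          rw [DihedralGroup.sr_mul_sr] at this
          have := (hRtriv _).mp this
          have : b = c := by linear_combination -this
          rw [this]
        · rintro (h1 | h2)
          · exact absurd h1 (by simp [DihedralGroup.one_def, -DihedralGroup.r_zero])
          · rw [h2]; exact hc
  · left
    refine ⟨i, hik, ?_⟩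
    ext x
    cases x with
    | r a =>
      simp only [Set.mem_setOf_eq, SetLike.mem_coe]
      constructor
      · intro hx; exact ⟨a, rfl, (hRr a).mp hx⟩
      · rintro ⟨a', ha', hcond⟩; cases ha'; exact (hRr a).mpr hcond
    | sr b =>
      simp only [Set.mem_setOf_eq, SetLike.mem_coe]
      constructor
      · intro hx; exact absurd ⟨b, hx⟩ hs
      · rintro ⟨a, ha, _⟩; exact absurd ha (by simp)
end

section
/- For every k ≥ 1 and every n ≥ 1, the dihedral group DihedralGroup (2^k) is uniformly abelian group representable for n via the elementary abelian group (Fin (k+1) → ZMod 2): for every choice of subgroups G_1, …, G_n of DihedralGroup (2^k) there exist subgroups A_1, …, A_n of (Fin (k+1) → ZMod 2) such that for every nonempty subset 𝒜 ⊆ {1, …, n}, the index [DihedralGroup (2^k) : ⋂_{i∈𝒜} G_i] equals [(Fin (k+1) → ZMod 2) : ⋂_{i∈𝒜} A_i]. -/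
theorem pow_dvd_iff_testBit (a n : ℕ) : 2^a ∣ n ↔ ∀ j < a, n.testBit j = false := by
  rw [Nat.dvd_iff_mod_eq_zero]
  constructor
  · intro h j hj
    have := congrArg (Nat.testBit · j) h
    simpa [Nat.testBit_mod_two_pow, hj] using this
  · intro h
    apply Nat.eq_of_testBit_eq
    intro j
    simp [Nat.testBit_mod_two_pow]
    intro hj
    exact h j hj

theorem pow_dvd_xor {a n m : ℕ} (hn : 2^a ∣ n) (hm : 2^a ∣ m) : 2^a ∣ n ^^^ m := by
  rw [pow_dvd_iff_testBit] at *
  intro j hj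
  simp [Nat.testBit_xor, hn j hj, hm j hj]

theorem xor_mod_two_pow (a n m : ℕ) : (n ^^^ m) % 2^a = (n % 2^a) ^^^ (m % 2^a) := by
  apply Nat.eq_of_testBit_eq
  intro j
  simp [Nat.testBit_mod_two_pow, Nat.testBit_xor]
  by_cases hj : j < a <;> simp [hj]

namespace Stmt4Aux

open DihedralGroup

/-- rotation part of a subgroup of the dihedral group -/
def rotSub (k : ℕ) (H : Subgroup (DihedralGroup (2^k))) : AddSubgroup (ZMod (2^k)) where
  carrier := {x | DihedralGroup.r x ∈ H}
  zero_mem' := by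
    simp only [Set.mem_setOf_eq, ← DihedralGroup.one_def]
    exact H.one_mem
  add_mem' := by
    intro x y hx hy
    simp only [Set.mem_setOf_eq] at *
    have := H.mul_mem hx hy
    rwa [DihedralGroup.r_mul_r] at this
  neg_mem' := by
    intro x hx
    simp only [Set.mem_setOf_eq] at *
    have h1 : DihedralGroup.r x * DihedralGroup.r (-x) = 1 := by
      rw [DihedralGroup.r_mul_r, add_neg_cancel, DihedralGroup.one_def]
    have := H.inv_mem hx
    rwa [← eq_inv_of_mul_eq_one_right h1] at this

def enc {k : ℕ} : DihedralGroup (2^k) → ℕ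
  | .r x => Nat.bit false x.val
  | .sr x => Nat.bit true x.val

def fmap (k : ℕ) (g : DihedralGroup (2^k)) : Fin (k+1) → ZMod 2 :=
  fun j => if (enc g).testBit j then 1 else 0

theorem enc_lt {k : ℕ} (g : DihedralGroup (2^k)) : enc g < 2^(k+1) := by
  haveI : NeZero (2^k) := ⟨pow_ne_zero k two_ne_zero⟩
  cases g with
  | r x =>
    have := ZMod.val_lt x
    simp only [enc, Nat.bit_val, Bool.toNat_false, Bool.toNat_true, pow_succ]
    omega
  | sr x =>
    have := ZMod.val_lt x
    simp only [enc, Nat.bit_val, Bool.toNat_false, Bool.toNat_true, pow_succ]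
    omega

theorem enc_injective {k : ℕ} : Function.Injective (enc (k := k)) := by
  haveI : NeZero (2^k) := ⟨pow_ne_zero k two_ne_zero⟩
  intro g g' h
  cases g with
  | r x => cases g' with
    | r y =>
      simp only [enc, Nat.bit_val, Bool.toNat_false, Bool.toNat_true] at h
      have : x.val = y.val := by omega
      exact congrArg _ (ZMod.val_injective _ this)
    | sr y => simp only [enc, Nat.bit_val, Bool.toNat_false, Bool.toNat_true] at h; omega
  | sr x => cases g' with
    | r y => simp only [enc, Nat.bit_val, Bool.toNat_false, Bool.toNat_true] at h; omega
    | sr y =>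
      simp only [enc, Nat.bit_val, Bool.toNat_false, Bool.toNat_true] at h
      have : x.val = y.val := by omega
      exact congrArg _ (ZMod.val_injective _ this)

theorem fmap_injective (k : ℕ) : Function.Injective (fmap k) := by
  intro g g' h
  apply enc_injective
  apply Nat.eq_of_testBit_eq
  intro j
  by_cases hj : j < k + 1
  · have := congrFun h ⟨j, hj⟩
    simp only [fmap] at this
    by_cases h1 : (enc g).testBit j <;> by_cases h2 : (enc g').testBit j <;>
      simp [h1, h2] at this ⊢
  · have b1 : (enc g).testBit j = false :=
      Nat.testBit_lt_two_pow (lt_of_lt_of_le (enc_lt g) (Nat.pow_le_pow_right (by norm_num) (by omega)))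
    have b2 : (enc g').testBit j = false :=
      Nat.testBit_lt_two_pow (lt_of_lt_of_le (enc_lt g') (Nat.pow_le_pow_right (by norm_num) (by omega)))
    rw [b1, b2]

theorem fmap_add {k : ℕ} (g g' g'' : DihedralGroup (2^k))
    (henc : enc g'' = enc g ^^^ enc g') : fmap k g + fmap k g' = fmap k g'' := by
  funext j
  simp only [fmap, Pi.add_apply, henc, Nat.testBit_xor]
  by_cases h1 : (enc g).testBit j <;> by_cases h2 : (enc g').testBit j <;> simp [h1, h2] <;> decide


theorem zmod_addsubgroup_classify' (k : ℕ) (R : AddSubgroup (ZMod (2^k))) :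
    ∃ a ≤ k, ∀ x : ZMod (2^k), x ∈ R ↔ 2^a ∣ x.val := by
  haveI : NeZero (2^k) := ⟨pow_ne_zero k two_ne_zero⟩
  by_cases htriv : ∀ x ∈ R, x = 0
  · refine ⟨k, le_rfl, fun x => ⟨fun hx => by simp [htriv x hx], fun hx => ?_⟩⟩
    have h0 : x.val = 0 := Nat.eq_zero_of_dvd_of_lt hx (ZMod.val_lt x)
    have : x = 0 := by rwa [ZMod.val_eq_zero] at h0
    rw [this]; exact R.zero_mem
  · push_neg at htriv
    obtain ⟨g₀, hg₀R, hg₀⟩ := htriv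
    have hP : ∃ a, ∃ x ∈ R, ¬ (2^(a+1) ∣ x.val) := by
      refine ⟨g₀.val, g₀, hg₀R, ?_⟩
      intro hdvd
      have h1 : g₀.val ≠ 0 := fun h => hg₀ (by rwa [ZMod.val_eq_zero] at h)
      have h2 : g₀.val < 2^(g₀.val+1) := lt_of_lt_of_le (Nat.lt_two_pow_self (n := _)) (Nat.pow_le_pow_right (by norm_num) (Nat.le_succ _))
      exact h1 (Nat.eq_zero_of_dvd_of_lt hdvd h2)
    classical
    set a := Nat.find hP with ha
    obtain ⟨g, hgR, hgnd⟩ := Nat.find_spec hP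
    have hlow : ∀ x ∈ R, 2^a ∣ x.val := by
      intro x hx
      rcases Nat.eq_zero_or_pos a with h0 | h0
      · simp [h0]
      · have := Nat.find_min hP (m := a - 1) (by omega)
        push_neg at this
        have := this x hx
        rwa [show a - 1 + 1 = a by omega] at this
    have hgval : g.val ≠ 0 := by
      intro h; rw [h] at hgnd; exact hgnd (dvd_zero _)
    have hak : a ≤ k := by
      have h1 : 2^a ≤ g.val := Nat.le_of_dvd (Nat.pos_of_ne_zero hgval) (hlow g hgR)
      have h2 : g.val < 2^k := ZMod.val_lt g
      have : (2:ℕ)^a < 2^k := lt_of_le_of_lt h1 h2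
      exact le_of_lt (Nat.pow_lt_pow_iff_right (by norm_num) |>.mp this)
    refine ⟨a, hak, fun x => ⟨hlow x, fun hx => ?_⟩⟩
    obtain ⟨m, hm⟩ := hlow g hgR
    have hmodd : ¬ (2 ∣ m) := by
      intro ⟨m', hm'⟩
      exact hgnd ⟨m', by rw [hm, hm', pow_succ]; ring⟩
    have hco : Nat.Coprime m (2^k) := by
      apply Nat.Coprime.pow_right
      exact Nat.coprime_two_right.mpr (Nat.odd_iff.mpr (Nat.two_dvd_ne_zero.mp hmodd))
    set u := ZMod.unitOfCoprime m hco with hu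
    obtain ⟨w, hw⟩ := hx
    set c : ZMod (2^k) := (↑w : ZMod (2^k)) * ↑u⁻¹ with hc
    have hgc : g = ((2^a * m : ℕ) : ZMod (2^k)) := by
      rw [← hm]
      simp [ZMod.natCast_val, ZMod.cast_id]
    have hx2 : x = ((2^a * w : ℕ) : ZMod (2^k)) := by
      rw [← hw]
      simp [ZMod.natCast_val, ZMod.cast_id]
    have key : x = c * g := by
      rw [hx2, hgc, hc]
      push_cast
      have : ((u⁻¹ : (ZMod (2^k))ˣ) : ZMod (2^k)) * ((m : ℕ) : ZMod (2^k)) = 1 := by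
        rw [show ((m : ℕ) : ZMod (2^k)) = (u : ZMod (2^k)) from (ZMod.coe_unitOfCoprime m hco).symm]
        exact u.inv_mul
      have h1 : (↑u⁻¹ : ZMod (2^k)) * ↑u = 1 := u.inv_mul
      rw [show ((m:ℕ):ZMod (2^k)) = (u:ZMod (2^k)) from (ZMod.coe_unitOfCoprime m hco).symm]
      linear_combination (-((2:ZMod (2^k))^a * (w:ℕ))) * h1
    have key2 : x = c.val • g := by
      rw [key, nsmul_eq_mul]
      congr 1
      simp [ZMod.natCast_val, ZMod.cast_id]
    rw [key2]
    exact AddSubgroup.nsmul_mem R hgR c.val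


theorem key_xor (k : ℕ) (H : Subgroup (DihedralGroup (2^k))) :
    ∀ g₁ ∈ H, ∀ g₂ ∈ H, ∃ g₃ ∈ H, enc g₃ = enc g₁ ^^^ enc g₂ := by
  have hrot : ∀ (H : Subgroup (DihedralGroup (2^k))) (x : ZMod (2^k)), x ∈ rotSub k H ↔ DihedralGroup.r x ∈ H :=
    fun H x => Iff.rfl
  have henc_r : ∀ x : ZMod (2^k), enc (.r x) = Nat.bit false x.val := fun x => rfl
  have henc_sr : ∀ x : ZMod (2^k), enc (.sr x) = Nat.bit true x.val := fun x => rfl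
  haveI : NeZero (2^k) := ⟨pow_ne_zero k two_ne_zero⟩
  obtain ⟨a, hak, hmem⟩ := zmod_addsubgroup_classify' k (rotSub k H)
  have hr_iff : ∀ x : ZMod (2^k), DihedralGroup.r x ∈ H ↔ 2^a ∣ x.val :=
    fun x => (hrot H x).symm.trans (hmem x)
  set φ : ZMod (2^k) →+* ZMod (2^a) := ZMod.castHom (pow_dvd_pow 2 hak) (ZMod (2^a)) with hφ
  have hφval : ∀ w : ZMod (2^k), φ w = ((w.val : ℕ) : ZMod (2^a)) := by
    intro w; rw [ZMod.castHom_apply, ← ZMod.natCast_val]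
  have hdvd_iff : ∀ w : ZMod (2^k), 2^a ∣ w.val ↔ φ w = 0 := by
    intro w; rw [hφval, ZMod.natCast_eq_zero_iff]
  have hrφ : ∀ x, DihedralGroup.r x ∈ H ↔ φ x = 0 := fun x => (hr_iff x).trans (hdvd_iff x)
  have hval : ∀ (x y : ZMod (2^k)), (((x.val ^^^ y.val : ℕ) : ZMod (2^k))).val = x.val ^^^ y.val :=
    fun x y => ZMod.val_natCast_of_lt (Nat.xor_lt_two_pow (ZMod.val_lt x) (ZMod.val_lt y))
  intro g₁ h₁ g₂ h₂
  cases g₁ with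
  | r x =>
    cases g₂ with
    | r y =>
      refine ⟨DihedralGroup.r ((x.val ^^^ y.val : ℕ) : ZMod (2^k)), ?_, ?_⟩
      · rw [hr_iff, hval]
        exact pow_dvd_xor ((hr_iff x).mp h₁) ((hr_iff y).mp h₂)
      · rw [henc_r, henc_r, henc_r, hval, Nat.xor_bit]; rfl
    | sr y =>
      set z : ZMod (2^k) := ((x.val ^^^ y.val : ℕ) : ZMod (2^k)) with hz
      have hφz : φ z = φ y := by
        rw [hφval, hφval, hz, hval, ZMod.natCast_eq_natCast_iff]
        show (x.val ^^^ y.val) % 2^a = y.val % 2^a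
        rw [xor_mod_two_pow]
        have hx0 : x.val % 2^a = 0 := Nat.mod_eq_zero_of_dvd ((hr_iff x).mp h₁)
        rw [hx0, Nat.zero_xor]
      have hzy : DihedralGroup.r (z - y) ∈ H := by
        rw [hrφ, map_sub, hφz, sub_self]
      have hsz : DihedralGroup.sr z ∈ H := by
        have := H.mul_mem h₂ hzy
        rwa [DihedralGroup.sr_mul_r, add_sub_cancel] at this
      refine ⟨DihedralGroup.sr z, hsz, ?_⟩
      rw [henc_sr, henc_r, henc_sr, hz, hval, Nat.xor_bit]; rfl
  | sr x =>
    cases g₂ with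
    | r y =>
      set z : ZMod (2^k) := ((x.val ^^^ y.val : ℕ) : ZMod (2^k)) with hz
      have hφz : φ z = φ x := by
        rw [hφval, hφval, hz, hval, ZMod.natCast_eq_natCast_iff]
        show (x.val ^^^ y.val) % 2^a = x.val % 2^a
        rw [xor_mod_two_pow]
        have hy0 : y.val % 2^a = 0 := Nat.mod_eq_zero_of_dvd ((hr_iff y).mp h₂)
        rw [hy0, Nat.xor_zero]
      have hzx : DihedralGroup.r (z - x) ∈ H := by
        rw [hrφ, map_sub, hφz, sub_self]
      have hsz : DihedralGroup.sr z ∈ H := by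
        have := H.mul_mem h₁ hzx
        rwa [DihedralGroup.sr_mul_r, add_sub_cancel] at this
      refine ⟨DihedralGroup.sr z, hsz, ?_⟩
      rw [henc_sr, henc_sr, henc_r, hz, hval, Nat.xor_bit]; rfl
    | sr y =>
      set z : ZMod (2^k) := ((x.val ^^^ y.val : ℕ) : ZMod (2^k)) with hz
      have hrot2 : DihedralGroup.r (y - x) ∈ H := by
        have := H.mul_mem h₁ h₂
        rwa [DihedralGroup.sr_mul_sr] at this
      have hφxy : φ x = φ y := by
        have h0 : φ (y - x) = 0 := (hrφ _).mp hrot2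
        rw [map_sub, sub_eq_zero] at h0
        exact h0.symm
      have hmod : x.val % 2^a = y.val % 2^a := by
        have := hφxy
        rw [hφval, hφval, ZMod.natCast_eq_natCast_iff] at this
        exact this
      have hz0 : 2^a ∣ z.val := by
        rw [hz, hval]
        apply Nat.dvd_of_mod_eq_zero
        rw [xor_mod_two_pow, hmod, Nat.xor_self]
      refine ⟨DihedralGroup.r z, (hr_iff z).mpr hz0, ?_⟩
      rw [henc_r, henc_sr, henc_sr, hz, hval, Nat.xor_bit]; rfl


end Stmt4Aux

theorem stmt_4 (k : ℕ) (hk : 1 ≤ k) (n : ℕ) (hn : 1 ≤ n)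
    (Gs : Fin n → Subgroup (DihedralGroup (2 ^ k))) :
    ∃ As : Fin n → AddSubgroup (Fin (k + 1) → ZMod 2),
      ∀ S : Finset (Fin n), S.Nonempty →
        (⨅ i ∈ S, Gs i).index = (⨅ i ∈ S, As i).index := by
  classical
  haveI : NeZero (2^k) := ⟨pow_ne_zero k two_ne_zero⟩
  have hinj := Stmt4Aux.fmap_injective k
  have hbij : Function.Bijective (Stmt4Aux.fmap k) := by
    rw [Fintype.bijective_iff_injective_and_card]
    refine ⟨hinj, ?_⟩
    rw [DihedralGroup.card, Fintype.card_fun, ZMod.card, Fintype.card_fin, pow_succ]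
    ring
  have hneg : ∀ v : Fin (k+1) → ZMod 2, -v = v := by
    intro v; funext j; rw [Pi.neg_apply]
    have : ∀ t : ZMod 2, -t = t := by decide
    exact this _
  have hA : ∀ i, ∃ A : AddSubgroup (Fin (k+1) → ZMod 2),
      (A : Set _) = Stmt4Aux.fmap k '' (Gs i : Set _) := by
    intro i
    refine ⟨{ carrier := Stmt4Aux.fmap k '' (Gs i : Set _), zero_mem' := ?zero,
              add_mem' := ?add, neg_mem' := ?neg}, rfl⟩
    case zero =>
      refine ⟨1, (Gs i).one_mem, ?_⟩
      funext j
      simp only [Stmt4Aux.fmap, show (1 : DihedralGroup (2^k)) = .r 0 from rfl,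
        Stmt4Aux.enc, Nat.bit_val, Bool.toNat_false, ZMod.val_zero, Pi.zero_apply]
      norm_num
    case add =>
      rintro u v ⟨g₁, h₁, rfl⟩ ⟨g₂, h₂, rfl⟩
      obtain ⟨g₃, h₃, henc⟩ := Stmt4Aux.key_xor k (Gs i) g₁ h₁ g₂ h₂
      exact ⟨g₃, h₃, (Stmt4Aux.fmap_add g₁ g₂ g₃ henc).symm⟩
    case neg =>
      intro u hu
      rwa [hneg u]
  choose As hAs using hA
  refine ⟨As, fun S hS => ?_⟩
  have hset : ((⨅ i ∈ S, As i : AddSubgroup _) : Set _) =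
      Stmt4Aux.fmap k '' ((⨅ i ∈ S, Gs i : Subgroup _) : Set _) := by
    simp only [AddSubgroup.coe_iInf, Subgroup.coe_iInf]
    rw [Set.image_iInter₂ hbij]
    refine Set.iInter_congr fun i => Set.iInter_congr fun hi => (hAs i)
  have hcard : Nat.card (⨅ i ∈ S, As i : AddSubgroup _) =
      Nat.card (⨅ i ∈ S, Gs i : Subgroup _) := by
    rw [← SetLike.coe_sort_coe (⨅ i ∈ S, As i), hset,
      ← SetLike.coe_sort_coe (⨅ i ∈ S, Gs i)]
    exact Nat.card_image_of_injective hinj _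
  have h1 := Subgroup.index_mul_card (⨅ i ∈ S, Gs i)
  have h2 := AddSubgroup.index_mul_card (⨅ i ∈ S, As i)
  rw [DihedralGroup.nat_card] at h1
  have hcardA : Nat.card (Fin (k+1) → ZMod 2) = 2 * 2^k := by
    rw [Nat.card_eq_fintype_card, Fintype.card_fun, ZMod.card, Fintype.card_fin, pow_succ]
    ring
  rw [hcardA, hcard] at h2
  have hpos : 0 < Nat.card (⨅ i ∈ S, Gs i : Subgroup _) := Nat.card_pos
  exact Nat.eq_of_mul_eq_mul_right hpos (h1.trans h2.symm)
end

section
/- Let k ≥ 2. Then for every n ≥ 1, the dicyclic (generalized quaternion) group QuaternionGroup (2^{k-1}) of order 2^{k+1} is uniformly abelian group representable for n via the elementary abelian group (Fin (k+1) → ZMod 2): for every choice of subgroups G_1, …, G_n of QuaternionGroup (2^{k-1}) there exist subgroups A_1, …, A_n of (Fin (k+1) → ZMod 2) such that for every nonempty subset 𝒜 ⊆ {1, …, n}, [QuaternionGroup (2^{k-1}) : ⋂_{i∈𝒜} G_i] = [(Fin (k+1) → ZMod 2) : ⋂_{i∈𝒜} A_i]. -/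
private lemma xorMod (v a b : ℕ) : (a ^^^ b) % 2^v = (a % 2^v) ^^^ (b % 2^v) := by
  apply Nat.eq_of_testBit_eq
  intro i
  simp only [Nat.testBit_mod_two_pow, Nat.testBit_xor]
  cases h : decide (i < v) <;> cases a.testBit i <;> cases b.testBit i <;> simp

private lemma zmod_subgroup (N K : ℕ) (hN : N = 2 ^ K) (E : AddSubgroup (ZMod N)) :
    ∃ v ≤ K, ∀ x : ZMod N, x ∈ E ↔ 2 ^ v ∣ x.val := by
  subst hN
  haveI : NeZero (2 ^ K) := ⟨by positivity⟩
  have hcard : Nat.card E ∣ 2 ^ K := by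
    have := AddSubgroup.card_addSubgroup_dvd_card E
    rwa [Nat.card_zmod] at this
  obtain ⟨j, hj, hEcard⟩ := (Nat.dvd_prime_pow Nat.prime_two).mp hcard
  refine ⟨K - j, Nat.sub_le _ _, ?_⟩
  set g : ZMod (2 ^ K) := ((2 ^ (K - j) : ℕ) : ZMod (2 ^ K)) with hg
  -- every element of E is a multiple of 2^(K-j)
  have hdvd : ∀ x : ZMod (2 ^ K), x ∈ E → 2 ^ (K - j) ∣ x.val := by
    intro x hx
    have h1 : addOrderOf x ∣ 2 ^ j := hEcard ▸ E.addOrderOf_dvd_natCard hx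
    have h2 : (2 ^ j) • x = 0 := addOrderOf_dvd_iff_nsmul_eq_zero.mp h1
    have h3 : (((2 ^ j * x.val : ℕ)) : ZMod (2 ^ K)) = 0 := by
      push_cast
      rw [ZMod.natCast_val, ZMod.cast_id]
      simpa [nsmul_eq_mul] using h2
    rw [ZMod.natCast_eq_zero_iff] at h3
    have hK : 2 ^ K = 2 ^ j * 2 ^ (K - j) := by
      rw [← pow_add, Nat.add_sub_cancel' hj]
    obtain ⟨c, hc⟩ := h3
    refine ⟨c, Nat.eq_of_mul_eq_mul_left (show 0 < 2^j by positivity) ?_⟩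
    rw [hc, hK]
    ring
  -- membership in zmultiples g is equivalent to divisibility of val
  have hzm : ∀ x : ZMod (2 ^ K), x ∈ AddSubgroup.zmultiples g ↔ 2 ^ (K - j) ∣ x.val := by
    intro x
    constructor
    · rintro hx
      obtain ⟨c, rfl⟩ := AddSubgroup.mem_zmultiples_iff.mp hx
      have : (c • g) = (((c : ZMod (2 ^ K)).val * 2 ^ (K - j) : ℕ) : ZMod (2 ^ K)) := by
        push_cast
        rw [ZMod.natCast_val, ZMod.cast_id, zsmul_eq_mul, hg]
        push_cast
        ring
      rw [this, ZMod.val_natCast]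
      exact (Nat.dvd_mod_iff (pow_dvd_pow 2 (Nat.sub_le _ _))).mpr
        (dvd_mul_left _ _)
    · rintro ⟨c, hc⟩
      have hx : x = (c : ZMod (2 ^ K)) • g := by
        have : x = ((x.val : ℕ) : ZMod (2 ^ K)) := by rw [ZMod.natCast_val, ZMod.cast_id]
        rw [this, hc, smul_eq_mul, hg]
        push_cast
        ring
      rw [hx]
      have : ((c : ZMod (2 ^ K))) • g = ((c : ZMod (2 ^ K)).val : ℤ) • g := by
        rw [smul_eq_mul, zsmul_eq_mul]
        push_cast
        rw [ZMod.natCast_val, ZMod.cast_id]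
      rw [this]
      exact AddSubgroup.zsmul_mem_zmultiples _ _
  -- E = zmultiples g by cardinality
  have hle : (E : Set (ZMod (2 ^ K))) ⊆ (AddSubgroup.zmultiples g : Set (ZMod (2 ^ K))) := by
    intro x hx
    exact (hzm x).mpr (hdvd x hx)
  have hcardg : Nat.card (AddSubgroup.zmultiples g) = 2 ^ j := by
    rw [Nat.card_zmultiples, hg, ZMod.addOrderOf_coe _ (NeZero.ne _)]
    rw [Nat.gcd_eq_right (pow_dvd_pow 2 (Nat.sub_le _ _)), Nat.pow_div (Nat.sub_le _ _) (by norm_num)]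
    congr 1
    omega
  have hEq : (E : Set (ZMod (2 ^ K))) = (AddSubgroup.zmultiples g : Set (ZMod (2 ^ K))) := by
    apply Set.eq_of_subset_of_ncard_le hle
    rw [← Nat.card_coe_set_eq, ← Nat.card_coe_set_eq]
    rw [show Nat.card (AddSubgroup.zmultiples g : Set (ZMod (2 ^ K))) = 2 ^ j from hcardg,
      show Nat.card (E : Set (ZMod (2 ^ K))) = 2 ^ j from hEcard]
  intro x
  rw [show (x ∈ E) = (x ∈ (E : Set (ZMod (2 ^ K)))) from rfl, hEq]
  exact hzm x

open QuaternionGroup in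
private def eps (k : ℕ) : QuaternionGroup (2 ^ (k - 1)) → (Fin (k + 1) → ZMod 2)
  | .a i => fun c => if c.val = 0 then 0 else if i.val.testBit (k - c.val) then 1 else 0
  | .xa i => fun c => if c.val = 0 then 1 else if i.val.testBit (k - c.val) then 1 else 0

private lemma ite_bit_inj {p q : Bool} (h : (if p then (1 : ZMod 2) else 0) = (if q then 1 else 0)) :
    p = q := by
  cases p <;> cases q <;> simp_all

private lemma ite_bit_add (p q : Bool) :
    (if (p ^^ q) then (1 : ZMod 2) else 0) = (if p then 1 else 0) + (if q then 1 else 0) := by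
  cases p <;> cases q <;> decide

private lemma two_mul_pow (k : ℕ) (hk : 1 ≤ k) : 2 * 2 ^ (k - 1) = 2 ^ k := by
  rw [← pow_succ']
  congr 1
  omega

private lemma val_lt_pow {k : ℕ} (hk : 1 ≤ k) (i : ZMod (2 * 2 ^ (k - 1))) : i.val < 2 ^ k := by
  haveI : NeZero (2 * 2 ^ (k - 1)) := ⟨by positivity⟩
  have h1 := ZMod.val_lt i
  have h2 := two_mul_pow k hk
  omega

private lemma eps_inj (k : ℕ) (hk : 1 ≤ k) : Function.Injective (eps k) := by
  haveI : NeZero (2 * 2 ^ (k - 1)) := ⟨by positivity⟩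
  have key : ∀ i i' : ZMod (2 * 2 ^ (k - 1)),
      (∀ c : Fin (k + 1), ¬ c.val = 0 →
        (if i.val.testBit (k - c.val) then (1 : ZMod 2) else 0) =
        (if i'.val.testBit (k - c.val) then 1 else 0)) → i = i' := by
    intro i i' h
    have : i.val = i'.val := by
      apply Nat.eq_of_testBit_eq
      intro b
      by_cases hb : b < k
      · have hc : k - b < k + 1 := by omega
        have h0 : ¬ (⟨k - b, hc⟩ : Fin (k + 1)).val = 0 := by simp; omega
        have := ite_bit_inj (h ⟨k - b, hc⟩ h0)
        simpa [show k - (k - b) = b by omega] using this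
      · rw [Nat.testBit_lt_two_pow, Nat.testBit_lt_two_pow]
        · exact lt_of_lt_of_le (val_lt_pow hk i') (Nat.pow_le_pow_right (by norm_num) (by omega))
        · exact lt_of_lt_of_le (val_lt_pow hk i) (Nat.pow_le_pow_right (by norm_num) (by omega))
    exact ZMod.val_injective _ this
  rintro (i | i) (i' | i') h
  · refine congrArg _ (key i i' fun c hc => ?_)
    simpa only [eps, if_neg hc] using congrFun h c
  · have := congrFun h ⟨0, by omega⟩
    simp [eps] at this
  · have := congrFun h ⟨0, by omega⟩
    simp [eps] at this
  · refine congrArg _ (key i i' fun c hc => ?_)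
    simpa only [eps, if_neg hc] using congrFun h c

private lemma eps_add_eq (k : ℕ) (N' : ℕ) (i j w : ZMod N') (hw : w.val = i.val ^^^ j.val)
    (c : Fin (k + 1)) :
    (if w.val.testBit (k - c.val) then (1 : ZMod 2) else 0) =
      (if i.val.testBit (k - c.val) then 1 else 0) + (if j.val.testBit (k - c.val) then 1 else 0) := by
  rw [hw, Nat.testBit_xor]
  exact ite_bit_add _ _

private lemma mod_two_pow_eq_zero_of_dvd {v a : ℕ} (h : 2 ^ v ∣ a) : a % 2 ^ v = 0 :=
  Nat.eq_zero_of_dvd_of_lt (Nat.dvd_mod_iff dvd_rfl |>.mpr h) (Nat.mod_lt _ (by positivity))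

private lemma dvd_xor (v a b : ℕ) (ha : 2 ^ v ∣ a) (hb : 2 ^ v ∣ b) : 2 ^ v ∣ a ^^^ b := by
  apply Nat.dvd_of_mod_eq_zero
  rw [xorMod, mod_two_pow_eq_zero_of_dvd ha, mod_two_pow_eq_zero_of_dvd hb]
  rfl

private lemma val_sub_dvd_iff (k v : ℕ) (hk : 1 ≤ k) (hv : (2:ℕ) ^ v ∣ 2 ^ k)
    (t w : ZMod (2 * 2 ^ (k - 1))) :
    2 ^ v ∣ (w - t).val ↔ w.val % 2 ^ v = t.val % 2 ^ v := by
  haveI : NeZero (2 * 2 ^ (k - 1)) := ⟨by positivity⟩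
  have hN := two_mul_pow k hk
  set d := w - t with hd
  have hw : w = t + d := by rw [hd]; ring
  have h2 : w.val % 2 ^ v = (t.val + d.val) % 2 ^ v := by
    rw [hw, ZMod.val_add]
    exact Nat.mod_mod_of_dvd _ (hN ▸ hv)
  constructor
  · intro h
    rw [h2, Nat.add_mod, mod_two_pow_eq_zero_of_dvd h, Nat.add_zero, Nat.mod_mod_of_dvd]
    exact dvd_rfl
  · intro h
    have h3 : (t.val + d.val) % 2 ^ v = (t.val + 0) % 2 ^ v := by
      rw [← h2, h, Nat.add_zero]
    exact (Nat.modEq_zero_iff_dvd).mp (Nat.ModEq.add_left_cancel' t.val h3)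

private lemma eps_image (k : ℕ) (hk : 1 ≤ k) (H : Subgroup (QuaternionGroup (2 ^ (k - 1)))) :
    ∃ A : AddSubgroup (Fin (k + 1) → ZMod 2), (A : Set (Fin (k + 1) → ZMod 2)) = eps k '' H := by
  haveI : NeZero (2 * 2 ^ (k - 1)) := ⟨by positivity⟩
  have hN := two_mul_pow k hk
  set E : AddSubgroup (ZMod (2 * 2 ^ (k - 1))) :=
    { carrier := {i | QuaternionGroup.a i ∈ H}
      zero_mem' := by
        show QuaternionGroup.a 0 ∈ H
        rw [← QuaternionGroup.one_def]
        exact H.one_mem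
      add_mem' := by
        intro x y hx hy
        show QuaternionGroup.a (x + y) ∈ H
        rw [← QuaternionGroup.a_mul_a]
        exact H.mul_mem hx hy
      neg_mem' := by
        intro x hx
        show QuaternionGroup.a (-x) ∈ H
        have h1 : QuaternionGroup.a (-x) * QuaternionGroup.a x = 1 := by
          rw [QuaternionGroup.a_mul_a, neg_add_cancel, ← QuaternionGroup.one_def]
        exact (eq_inv_of_mul_eq_one_left h1) ▸ H.inv_mem hx } with hEdef
  obtain ⟨v, hv, hE⟩ := zmod_subgroup (2 * 2 ^ (k - 1)) k hN E
  have hvdvd : (2:ℕ) ^ v ∣ 2 ^ k := pow_dvd_pow 2 hv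
  have haE : ∀ i, QuaternionGroup.a i ∈ H ↔ 2 ^ v ∣ i.val := fun i => hE i
  have hxval : ∀ i j : ZMod (2 * 2 ^ (k - 1)),
      ((↑(i.val ^^^ j.val) : ZMod (2 * 2 ^ (k - 1)))).val = i.val ^^^ j.val := by
    intro i j
    apply ZMod.val_cast_of_lt
    have := Nat.xor_lt_two_pow (val_lt_pow hk i) (val_lt_pow hk j)
    omega
  refine ⟨{ carrier := eps k '' H, zero_mem' := ?_, add_mem' := ?_, neg_mem' := ?_ }, rfl⟩
  · rintro x y ⟨g, hg, rfl⟩ ⟨h, hh, rfl⟩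
    rcases g with s | t <;> rcases h with s' | t'
    -- a s + a s'
    · refine ⟨QuaternionGroup.a (↑(s.val ^^^ s'.val)), ?_, ?_⟩
      · rw [SetLike.mem_coe, haE, hxval]
        exact dvd_xor _ _ _ ((haE s).mp hg) ((haE s').mp hh)
      · funext c
        by_cases hc : c.val = 0
        · simp only [eps, Pi.add_apply, if_pos hc]; rfl
        · simp only [eps, Pi.add_apply, if_neg hc]
          exact eps_add_eq k _ s s' _ (hxval s s') c
    -- a s + xa t'
    · have hd : QuaternionGroup.a ((↑(t'.val ^^^ s.val) : ZMod (2 * 2 ^ (k - 1))) - t') ∈ H := by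
        rw [haE, val_sub_dvd_iff k v hk hvdvd t' _]
        rw [hxval t' s, xorMod, mod_two_pow_eq_zero_of_dvd ((haE s).mp hg), Nat.xor_zero]
      refine ⟨QuaternionGroup.xa (↑(t'.val ^^^ s.val)), ?_, ?_⟩
      · have h6 := H.mul_mem hh hd
        rw [QuaternionGroup.xa_mul_a] at h6
        have h5 : t' + ((↑(t'.val ^^^ s.val) : ZMod (2 * 2 ^ (k - 1))) - t') =
            (↑(t'.val ^^^ s.val) : ZMod (2 * 2 ^ (k - 1))) := by ring
        rwa [h5] at h6
      · funext c
        by_cases hc : c.val = 0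
        · simp only [eps, Pi.add_apply, if_pos hc]; rfl
        · simp only [eps, Pi.add_apply, if_neg hc]
          refine eps_add_eq k _ s t' _ ?_ c
          rw [hxval, Nat.xor_comm]
    -- xa t + a s'
    · have hd : QuaternionGroup.a ((↑(t.val ^^^ s'.val) : ZMod (2 * 2 ^ (k - 1))) - t) ∈ H := by
        rw [haE, val_sub_dvd_iff k v hk hvdvd t _]
        rw [hxval t s', xorMod, mod_two_pow_eq_zero_of_dvd ((haE s').mp hh), Nat.xor_zero]
      refine ⟨QuaternionGroup.xa (↑(t.val ^^^ s'.val)), ?_, ?_⟩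
      · have h6 := H.mul_mem hg hd
        rw [QuaternionGroup.xa_mul_a] at h6
        have h5 : t + ((↑(t.val ^^^ s'.val) : ZMod (2 * 2 ^ (k - 1))) - t) =
            (↑(t.val ^^^ s'.val) : ZMod (2 * 2 ^ (k - 1))) := by ring
        rwa [h5] at h6
      · funext c
        by_cases hc : c.val = 0
        · simp only [eps, Pi.add_apply, if_pos hc]; rfl
        · simp only [eps, Pi.add_apply, if_neg hc]
          exact eps_add_eq k _ t s' _ (hxval t s') c
    -- xa t + xa t'
    · have e1 := H.mul_mem hg hh
      have e2 := H.mul_mem hg hg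
      rw [QuaternionGroup.xa_mul_xa] at e1 e2
      have e3 : t' - t ∈ E := by
        have h4 := E.sub_mem (e1 : _ ∈ E) (e2 : _ ∈ E)
        have h5 : ((2 ^ (k-1) : ℕ) : ZMod (2 * 2 ^ (k - 1))) + t' - t -
            (((2 ^ (k-1) : ℕ) : ZMod (2 * 2 ^ (k - 1))) + t - t) = t' - t := by ring
        rwa [h5] at h4
      have hmod : t'.val % 2 ^ v = t.val % 2 ^ v :=
        (val_sub_dvd_iff k v hk hvdvd t t').mp ((hE _).mp e3)
      refine ⟨QuaternionGroup.a (↑(t.val ^^^ t'.val)), ?_, ?_⟩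
      · rw [SetLike.mem_coe, haE, hxval]
        apply Nat.dvd_of_mod_eq_zero
        rw [xorMod, hmod, Nat.xor_self]
      · funext c
        by_cases hc : c.val = 0
        · simp only [eps, Pi.add_apply, if_pos hc]; rfl
        · simp only [eps, Pi.add_apply, if_neg hc]
          exact eps_add_eq k _ t t' _ (hxval t t') c
  · refine ⟨1, H.one_mem, ?_⟩
    rw [QuaternionGroup.one_def]
    funext c
    simp [eps, ZMod.val_zero]
  · rintro x ⟨g, hg, rfl⟩
    refine ⟨g, hg, ?_⟩
    funext c
    rw [Pi.neg_apply]
    exact (show ∀ z : ZMod 2, z = -z by decide) _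

theorem stmt_10 (k : ℕ) (hk : 2 ≤ k) (n : ℕ) (hn : 1 ≤ n)
    (Gs : Fin n → Subgroup (QuaternionGroup (2 ^ (k - 1)))) :
    ∃ As : Fin n → AddSubgroup (Fin (k + 1) → ZMod 2),
      ∀ S : Finset (Fin n), S.Nonempty →
        (⨅ i ∈ S, Gs i).index = (⨅ i ∈ S, As i).index := by
  have hk1 : 1 ≤ k := by omega
  haveI : NeZero (2 ^ (k - 1)) := ⟨by positivity⟩
  have hA : ∀ i, ∃ A : AddSubgroup (Fin (k + 1) → ZMod 2),
      (A : Set (Fin (k + 1) → ZMod 2)) = eps k '' (Gs i) := fun i => eps_image k hk1 (Gs i)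
  choose As hAs using hA
  refine ⟨As, fun S hS => ?_⟩
  have hinj := eps_inj k hk1
  have hGcard : Nat.card (QuaternionGroup (2 ^ (k - 1))) = 2 ^ (k + 1) := by
    rw [Nat.card_eq_fintype_card, QuaternionGroup.card]
    rw [show (4 : ℕ) = 2 ^ 2 by norm_num, ← pow_add]
    congr 1
    omega
  have hVcard : Nat.card (Fin (k + 1) → ZMod 2) = 2 ^ (k + 1) := by
    simp [Nat.card_eq_fintype_card]
  obtain ⟨i0, hi0⟩ := hS
  have hcar : ((⨅ i ∈ S, As i : AddSubgroup (Fin (k + 1) → ZMod 2)) :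
        Set (Fin (k + 1) → ZMod 2))
      = eps k '' ((⨅ i ∈ S, Gs i : Subgroup (QuaternionGroup (2 ^ (k - 1)))) : Set _) := by
    ext x
    simp only [SetLike.mem_coe, AddSubgroup.mem_iInf]
    constructor
    · intro hx
      have hx0 : x ∈ eps k '' (Gs i0) := by rw [← hAs i0]; exact hx i0 hi0
      obtain ⟨g, hg0, rfl⟩ := hx0
      refine Set.mem_image_of_mem _ ?_
      rw [SetLike.mem_coe, Subgroup.mem_iInf]
      intro i
      rw [Subgroup.mem_iInf]
      intro hi
      have hxi := hx i hi
      rw [← SetLike.mem_coe, hAs i] at hxi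
      obtain ⟨g', hg', he⟩ := hxi
      exact (hinj he) ▸ hg'
    · rintro ⟨g, hg, rfl⟩ i hi
      rw [← SetLike.mem_coe, hAs i]
      refine ⟨g, ?_, rfl⟩
      rw [SetLike.mem_coe, Subgroup.mem_iInf] at hg
      have := hg i
      rw [Subgroup.mem_iInf] at this
      exact this hi
  have hcards : Nat.card (⨅ i ∈ S, As i : AddSubgroup (Fin (k + 1) → ZMod 2))
      = Nat.card (⨅ i ∈ S, Gs i : Subgroup (QuaternionGroup (2 ^ (k - 1)))) := by
    have h1 : Nat.card (⨅ i ∈ S, As i : AddSubgroup (Fin (k + 1) → ZMod 2))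
        = Nat.card ((⨅ i ∈ S, As i : AddSubgroup (Fin (k + 1) → ZMod 2)) :
            Set (Fin (k + 1) → ZMod 2)) := rfl
    rw [h1, hcar, Nat.card_image_of_injective hinj]
    rfl
  have hfin1 : 0 < Nat.card (⨅ i ∈ S, Gs i : Subgroup (QuaternionGroup (2 ^ (k - 1)))) :=
    Nat.card_pos
  have e1 := Subgroup.index_mul_card (⨅ i ∈ S, Gs i)
  have e2 := AddSubgroup.index_mul_card (⨅ i ∈ S, As i)
  rw [hGcard] at e1
  rw [hVcard, hcards] at e2
  exact Nat.eq_of_mul_eq_mul_right hfin1 (e1.trans e2.symm)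
end

section
/- Let p be a prime and let G be a finite p-group of order p^m. Then G is uniformly abelian group representable for n = 2 via the elementary abelian group (Fin m → ZMod p): for every pair of subgroups G_1, G_2 of G there exist subgroups A_1, A_2 of A = (Fin m → ZMod p) such that [G : G_1] = [A : A_1], [G : G_2] = [A : A_2], and [G : G_1 ∩ G_2] = [A : A_1 ∩ A_2]. -/
private def resMap (p m s k : ℕ) (h : s + k ≤ m) :
    (Fin m → ZMod p) →+ (Fin k → ZMod p) where
  toFun f := fun j => f ⟨s + j, by have := j.isLt; omega⟩
  map_zero' := rfl
  map_add' _ _ := rfl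

private lemma resMap_surjective (p m s k : ℕ) (h : s + k ≤ m) :
    Function.Surjective (resMap p m s k h) := by
  intro g
  refine ⟨fun i => if h2 : s ≤ (i : ℕ) ∧ (i : ℕ) < s + k then g ⟨i - s, by omega⟩ else 0, ?_⟩
  funext j
  have hj := j.isLt
  simp only [resMap, AddMonoidHom.coe_mk, ZeroHom.coe_mk]
  rw [dif_pos ⟨by omega, by omega⟩]
  congr 1
  ext
  simp

private lemma mem_ker_resMap (p m s k : ℕ) (h : s + k ≤ m) (f : Fin m → ZMod p) :
    f ∈ (resMap p m s k h).ker ↔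
      ∀ i : Fin m, s ≤ (i : ℕ) → (i : ℕ) < s + k → f i = 0 := by
  rw [AddMonoidHom.mem_ker, funext_iff]
  constructor
  · intro hf i h1 h2
    have := hf ⟨(i : ℕ) - s, by omega⟩
    simpa only [resMap, AddMonoidHom.coe_mk, ZeroHom.coe_mk, Fin.eta,
      show s + ((i : ℕ) - s) = (i : ℕ) by omega, Pi.zero_apply] using this
  · intro hf j
    have hj := j.isLt
    exact hf _ (by simp) (by simp [hj])

private lemma index_ker_resMap (p m s k : ℕ) (hp : p.Prime) (h : s + k ≤ m) :
    (resMap p m s k h).ker.index = p ^ k := by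
  haveI : Fact p.Prime := ⟨hp⟩
  rw [AddSubgroup.index_ker]
  rw [AddMonoidHom.range_eq_top.mpr (resMap_surjective p m s k h),
    Nat.card_congr AddSubgroup.topEquiv.toEquiv]
  simp [Nat.card_eq_fintype_card, ZMod.card]

theorem stmt_13 (p : ℕ) (hp : p.Prime) (G : Type) [Group G] [Fintype G]
    (m : ℕ) (hG : Nat.card G = p ^ m) (G1 G2 : Subgroup G) :
    ∃ A1 A2 : AddSubgroup (Fin m → ZMod p),
      G1.index = A1.index ∧ G2.index = A2.index ∧
        (G1 ⊓ G2).index = (A1 ⊓ A2).index := by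
  obtain ⟨a, ham, ha⟩ := (Nat.dvd_prime_pow hp).mp (hG ▸ G1.index_dvd_card)
  obtain ⟨b, hbm, hb⟩ := (Nat.dvd_prime_pow hp).mp (hG ▸ G2.index_dvd_card)
  obtain ⟨c, hcm, hc⟩ := (Nat.dvd_prime_pow hp).mp (hG ▸ (G1 ⊓ G2).index_dvd_card)
  have hac : a ≤ c := by
    have := Subgroup.index_dvd_of_le (inf_le_left : G1 ⊓ G2 ≤ G1)
    rw [ha, hc] at this
    exact (Nat.pow_dvd_pow_iff_le_right hp.one_lt).mp this
  have hbc : b ≤ c := by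
    have := Subgroup.index_dvd_of_le (inf_le_right : G1 ⊓ G2 ≤ G2)
    rw [hb, hc] at this
    exact (Nat.pow_dvd_pow_iff_le_right hp.one_lt).mp this
  have hcab : c ≤ a + b := by
    have := Subgroup.index_inf_le (H := G1) (K := G2)
    rw [ha, hb, hc, ← pow_add] at this
    exact (Nat.pow_le_pow_iff_right hp.one_lt).mp this
  refine ⟨(resMap p m 0 a (by omega)).ker, (resMap p m (c - b) b (by omega)).ker, ?_, ?_, ?_⟩
  · rw [ha, index_ker_resMap p m 0 a hp]
  · rw [hb, index_ker_resMap p m (c - b) b hp]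
  · have hinf : (resMap p m 0 a (by omega : 0 + a ≤ m)).ker ⊓
        (resMap p m (c - b) b (by omega : c - b + b ≤ m)).ker =
        (resMap p m 0 c (by omega : 0 + c ≤ m)).ker := by
      ext f
      simp only [AddSubgroup.mem_inf, mem_ker_resMap]
      constructor
      · rintro ⟨h1, h2⟩ i _ h3
        by_cases hia : (i : ℕ) < a
        · exact h1 i (by omega) (by omega)
        · exact h2 i (by omega) (by omega)
      · intro hf
        exact ⟨fun i h1 h2 => hf i h1 (by omega), fun i h1 h2 => hf i (by omega) (by omega)⟩
    rw [hinf, hc, index_ker_resMap p m 0 c hp]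
end

section
/- Let G and H be finite groups whose orders are coprime. If G is abelian group representable for n and H is abelian group representable for n, then the direct product G × H is abelian group representable for n. -/
lemma aux_mem_of_coprime {G H : Type} [Group G] [Fintype G] [Group H] [Fintype H]
    (hco : Nat.Coprime (Nat.card G) (Nat.card H)) (K : Subgroup (G × H))
    {g : G} {h : H} (hgh : (g, h) ∈ K) : (g, (1 : H)) ∈ K := by
  have h1 : ((g, h) : G × H) ^ Nat.card H = (g ^ Nat.card H, 1) := by
    simp [Prod.pow_mk, pow_card_eq_one']
  have hK : ((g ^ Nat.card H, (1 : H)) : G × H) ∈ K := h1 ▸ K.pow_mem hgh _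
  obtain ⟨u, v, huv⟩ := (Nat.isCoprime_iff_coprime.2 hco).symm
  have key : (g ^ Nat.card H) ^ u = g := by
    rw [← zpow_natCast g, ← zpow_mul]
    conv_rhs => rw [← zpow_one g, ← huv]
    rw [zpow_add, mul_comm (Nat.card H : ℤ) u, mul_comm (v : ℤ) (Nat.card G : ℤ),
      zpow_mul g (Nat.card G : ℤ) v, zpow_natCast g (Nat.card G), pow_card_eq_one',
      one_zpow, mul_one]
  have h2 : ((g ^ Nat.card H, (1 : H)) : G × H) ^ u = ((g ^ Nat.card H) ^ u, (1:H) ^ u) := rfl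
  have := K.zpow_mem hK u
  rw [h2, key, one_zpow] at this
  exact this

lemma aux_eq_prod {G H : Type} [Group G] [Fintype G] [Group H] [Fintype H]
    (hco : Nat.Coprime (Nat.card G) (Nat.card H)) (K : Subgroup (G × H)) :
    K = (K.map (MonoidHom.fst G H)).prod (K.map (MonoidHom.snd G H)) := by
  ext ⟨g, h⟩
  simp only [Subgroup.mem_prod, Subgroup.mem_map, MonoidHom.coe_fst, MonoidHom.coe_snd]
  constructor
  · rintro hk
    exact ⟨⟨(g, h), hk, rfl⟩, ⟨(g, h), hk, rfl⟩⟩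
  · rintro ⟨⟨⟨a, b⟩, hab, rfl⟩, ⟨⟨c, d⟩, hcd, rfl⟩⟩
    have h1 : ((a, (1:H)) : G × H) ∈ K := aux_mem_of_coprime hco K hab
    have h2 : (((1:G), d) : G × H) ∈ K := by
      have := aux_mem_of_coprime hco.symm
        (K.comap ((MulEquiv.prodComm : H × G ≃* G × H) : H × G →* G × H)) (g := d) (h := c) (by
          simpa [Subgroup.mem_comap] using hcd)
      simpa [Subgroup.mem_comap] using this
    have := K.mul_mem h1 h2
    simpa using this

lemma aux_iInf_prod {G H : Type} [Group G] [Group H] {n : ℕ} (S : Finset (Fin n))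
    (P : Fin n → Subgroup G) (Q : Fin n → Subgroup H) :
    (⨅ i ∈ S, (P i).prod (Q i)) = (⨅ i ∈ S, P i).prod (⨅ i ∈ S, Q i) := by
  ext ⟨g, h⟩
  simp only [Subgroup.mem_iInf, Subgroup.mem_prod, Subgroup.mem_iInf]
  exact ⟨fun hx => ⟨fun i hi => (hx i hi).1, fun i hi => (hx i hi).2⟩,
    fun hx i hi => ⟨hx.1 i hi, hx.2 i hi⟩⟩

theorem stmt_15 (G H : Type) [Group G] [Fintype G] [Group H] [Fintype H]
    (hco : Nat.Coprime (Nat.card G) (Nat.card H)) (n : ℕ)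
    (hG : AbelianGroupRepresentable G n) (hH : AbelianGroupRepresentable H n) :
    AbelianGroupRepresentable (G × H) n := by
  intro Ks
  obtain ⟨A, _, _, As, hA⟩ := hG (fun i => (Ks i).map (MonoidHom.fst G H))
  obtain ⟨B, _, _, Bs, hB⟩ := hH (fun i => (Ks i).map (MonoidHom.snd G H))
  refine ⟨A × B, inferInstance, inferInstance, fun i => (As i).prod (Bs i), ?_⟩
  intro S hS
  have hK : ∀ i, Ks i = ((Ks i).map (MonoidHom.fst G H)).prod ((Ks i).map (MonoidHom.snd G H)) :=
    fun i => aux_eq_prod hco (Ks i)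
  calc (⨅ i ∈ S, Ks i).index
      = ((⨅ i ∈ S, (Ks i).map (MonoidHom.fst G H)).prod
          (⨅ i ∈ S, (Ks i).map (MonoidHom.snd G H))).index := by
        rw [← aux_iInf_prod]
        congr 1
        exact iInf_congr fun i => by rw [← hK i]
    _ = (⨅ i ∈ S, (Ks i).map (MonoidHom.fst G H)).index *
          (⨅ i ∈ S, (Ks i).map (MonoidHom.snd G H)).index := Subgroup.index_prod _ _
    _ = (⨅ i ∈ S, As i).index * (⨅ i ∈ S, Bs i).index := by rw [hA S hS, hB S hS]
    _ = ((⨅ i ∈ S, As i).prod (⨅ i ∈ S, Bs i)).index := (Subgroup.index_prod _ _).symm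
    _ = (⨅ i ∈ S, (As i).prod (Bs i)).index := by rw [aux_iInf_prod]
end

section
/- Every finite nilpotent group G is abelian group representable for n = 2: for every pair of subgroups G_1, G_2 of G there exists a finite abelian group A with subgroups A_1, A_2 such that [G : G_1] = [A : A_1], [G : G_2] = [A : A_2], and [G : G_1 ∩ G_2] = [A : A_1 ∩ A_2]. -/
open Subgroup

lemma aux_prod_inf_prod {G N : Type*} [Group G] [Group N]
    (H H' : Subgroup G) (K K' : Subgroup N) :
    (H.prod K) ⊓ (H'.prod K') = (H ⊓ H').prod (K ⊓ K') := by
  ext ⟨x, y⟩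
  simp only [Subgroup.mem_inf, Subgroup.mem_prod]
  tauto

lemma aux_card_mult_zmod (n : ℕ) [NeZero n] :
    Nat.card (Multiplicative (ZMod n)) = n := by
  rw [Nat.card_congr Multiplicative.toAdd, Nat.card_zmod]

lemma aux_zpowers_index (n d : ℕ) (hn : n ≠ 0) (hd : d ∣ n) :
    (Subgroup.zpowers (Multiplicative.ofAdd ((d : ℕ) : ZMod n))).index = d := by
  haveI : NeZero n := ⟨hn⟩
  have hcard : Nat.card (Subgroup.zpowers (Multiplicative.ofAdd ((d : ℕ) : ZMod n))) = n / d := by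
    rw [Nat.card_zpowers, orderOf_ofAdd_eq_addOrderOf, ZMod.addOrderOf_coe d hn,
      Nat.gcd_eq_right hd]
  have h := Subgroup.card_mul_index (Subgroup.zpowers (Multiplicative.ofAdd ((d : ℕ) : ZMod n)))
  rw [hcard, aux_card_mult_zmod] at h
  have hdpos : 0 < d := Nat.pos_of_ne_zero (fun h0 => hn (by simpa [h0] using hd))
  have hnd : 0 < n / d := Nat.div_pos (Nat.le_of_dvd (Nat.pos_of_ne_zero hn) hd) hdpos
  have h2 : (n / d) * d = n := Nat.div_mul_cancel hd
  exact Nat.eq_of_mul_eq_mul_left hnd (h.trans h2.symm)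

lemma aux_index_inf_dvd (G : Type) [Group G] [Fintype G] (hnil : Group.IsNilpotent G)
    (H K : Subgroup G) : (H ⊓ K).index ∣ H.index * K.index := by
  have hc : (H ⊓ K).index ≠ 0 := Subgroup.index_ne_zero_of_finite
  have hH : H.index ≠ 0 := Subgroup.index_ne_zero_of_finite
  have hK : K.index ≠ 0 := Subgroup.index_ne_zero_of_finite
  rw [← Nat.factorization_le_iff_dvd hc (Nat.mul_ne_zero hH hK)]
  rw [Nat.factorization_mul hH hK]
  intro p
  rw [Finsupp.add_apply]
  by_cases hp : p.Prime
  · haveI : Fact p.Prime := ⟨hp⟩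
    obtain ⟨P⟩ : Nonempty (Sylow p G) := inferInstance
    haveI hPn : (P : Subgroup G).Normal :=
      ((isNilpotent_of_finite_tfae (G := G)).out 0 3 rfl rfl).mp hnil p ⟨hp⟩ P
    have hPi : ¬ p ∣ (P : Subgroup G).index := P.not_dvd_index
    -- key : factorization of index at p equals factorization of relindex in P
    have key : ∀ L : Subgroup G,
        L.index.factorization p = ((L.relIndex P).factorization) p := by
      intro L
      have e1 : ((P : Subgroup G) ⊓ L).relIndex L * L.index = ((P : Subgroup G) ⊓ L).index :=
        relIndex_mul_index inf_le_right
      have e2 : ((P : Subgroup G) ⊓ L).relIndex P * (P : Subgroup G).index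
          = ((P : Subgroup G) ⊓ L).index := relIndex_mul_index inf_le_left
      rw [inf_relIndex_right] at e1
      rw [inf_relIndex_left] at e2
      have h1 : (P : Subgroup G).relIndex L * L.index
          = L.relIndex P * (P : Subgroup G).index := e1.trans e2.symm
      have hPrel : ¬ p ∣ (P : Subgroup G).relIndex L :=
        fun h => hPi (h.trans (relIndex_dvd_index_of_normal (P : Subgroup G) L))
      have hne1 : (P : Subgroup G).relIndex L ≠ 0 := Subgroup.index_ne_zero_of_finite
      have hne2 : L.index ≠ 0 := Subgroup.index_ne_zero_of_finite
      have hne3 : L.relIndex P ≠ 0 := Subgroup.index_ne_zero_of_finite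
      have hne4 : (P : Subgroup G).index ≠ 0 := Subgroup.index_ne_zero_of_finite
      have := congrArg (fun n : ℕ => n.factorization p) h1
      simpa [Nat.factorization_mul hne1 hne2, Nat.factorization_mul hne3 hne4,
        Nat.factorization_eq_zero_of_not_dvd hPrel,
        Nat.factorization_eq_zero_of_not_dvd hPi] using this
    rw [key H, key K, key (H ⊓ K)]
    -- all relIndexes are powers of p
    obtain ⟨nH, hnH⟩ : ∃ n : ℕ, H.relIndex P = p ^ n := P.isPGroup'.index _
    obtain ⟨nK, hnK⟩ : ∃ n : ℕ, K.relIndex P = p ^ n := P.isPGroup'.index _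
    obtain ⟨nC, hnC⟩ : ∃ n : ℕ, (H ⊓ K).relIndex P = p ^ n := P.isPGroup'.index _
    have hle : (H ⊓ K).relIndex P ≤ H.relIndex P * K.relIndex P := relIndex_inf_le
    rw [hnH, hnK, hnC, ← pow_add] at hle
    have : nC ≤ nH + nK := (Nat.pow_le_pow_iff_right hp.one_lt).mp hle
    rw [hnH, hnK, hnC, hp.factorization_pow, hp.factorization_pow, hp.factorization_pow]
    simpa using this
  · simp [Nat.factorization_eq_zero_of_not_prime _ hp]

theorem stmt_16 (G : Type) [Group G] [Fintype G] (hnil : Group.IsNilpotent G)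
    (G1 G2 : Subgroup G) :
    ∃ (A : Type) (_ : CommGroup A) (_ : Fintype A) (A1 A2 : Subgroup A),
      G1.index = A1.index ∧ G2.index = A2.index ∧
        (G1 ⊓ G2).index = (A1 ⊓ A2).index := by
  set a := G1.index with ha_def
  set b := G2.index with hb_def
  set c := (G1 ⊓ G2).index with hc_def
  have hac : a ∣ c := Subgroup.index_dvd_of_le inf_le_left
  have hbc : b ∣ c := Subgroup.index_dvd_of_le inf_le_right
  have hcab : c ∣ a * b := aux_index_inf_dvd G hnil G1 G2
  have ha : a ≠ 0 := Subgroup.index_ne_zero_of_finite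
  have hb : b ≠ 0 := Subgroup.index_ne_zero_of_finite
  have hc : c ≠ 0 := Subgroup.index_ne_zero_of_finite
  haveI : NeZero a := ⟨ha⟩
  haveI : NeZero b := ⟨hb⟩
  set d1 := a * b / c with hd1_def
  set d2 := c / a with hd2_def
  have h2 : a * d2 = c := Nat.mul_div_cancel' hac
  have h1 : d1 * c = a * b := Nat.div_mul_cancel hcab
  have hd2b : d2 ∣ b := by
    have : a * d2 ∣ a * b := h2 ▸ hcab
    exact (mul_dvd_mul_iff_left ha).mp this
  have hd1a : d1 ∣ a := by
    have hbe : b * (c / b) = c := Nat.mul_div_cancel' hbc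
    have : b * (d1 * (c / b)) = b * a := by
      calc b * (d1 * (c / b)) = d1 * (b * (c / b)) := by ring
        _ = d1 * c := by rw [hbe]
        _ = a * b := h1
        _ = b * a := by ring
    exact ⟨c / b, (Nat.eq_of_mul_eq_mul_left (Nat.pos_of_ne_zero hb) this).symm⟩
  have hd1d2 : d1 * d2 = b := by
    have : a * (d1 * d2) = a * b := by
      calc a * (d1 * d2) = d1 * (a * d2) := by ring
        _ = d1 * c := by rw [h2]
        _ = a * b := h1
    exact Nat.eq_of_mul_eq_mul_left (Nat.pos_of_ne_zero ha) this
  refine ⟨Multiplicative (ZMod a) × Multiplicative (ZMod b), inferInstance, inferInstance,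
    (⊥ : Subgroup (Multiplicative (ZMod a))).prod (⊤ : Subgroup (Multiplicative (ZMod b))),
    (Subgroup.zpowers (Multiplicative.ofAdd ((d1 : ℕ) : ZMod a))).prod
      (Subgroup.zpowers (Multiplicative.ofAdd ((d2 : ℕ) : ZMod b))), ?_, ?_, ?_⟩
  · rw [Subgroup.index_prod, Subgroup.index_bot, Subgroup.index_top,
      aux_card_mult_zmod, mul_one]
  · rw [Subgroup.index_prod, aux_zpowers_index a d1 ha hd1a,
      aux_zpowers_index b d2 hb hd2b, hd1d2]
  · rw [aux_prod_inf_prod, bot_inf_eq, top_inf_eq, Subgroup.index_prod,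
      Subgroup.index_bot, aux_card_mult_zmod, aux_zpowers_index b d2 hb hd2b, h2]
end

section
/- Let G be a finite group that is not nilpotent. Then for every n ≥ 2, G is not abelian group representable for n: there exist subgroups G_1, …, G_n of G such that no finite abelian group A with subgroups A_1, …, A_n satisfies [G : ⋂_{i∈𝒜} G_i] = [A : ⋂_{i∈𝒜} A_i] for every nonempty subset 𝒜 ⊆ {1, …, n}. -/
theorem stmt_17 (G : Type) [Group G] [Fintype G] (hnil : ¬ Group.IsNilpotent G)
    (n : ℕ) (hn : 2 ≤ n) :
    ∃ Gs : Fin n → Subgroup G,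
      ∀ (A : Type) (_ : CommGroup A) (_ : Fintype A) (As : Fin n → Subgroup A),
        ¬ ∀ S : Finset (Fin n), S.Nonempty →
            (⨅ i ∈ S, Gs i).index = (⨅ i ∈ S, As i).index := by
  classical
  have tfae := isNilpotent_of_finite_tfae (G := G)
  have h4 : ¬ ∀ (p : ℕ) (_hp : Fact p.Prime) (P : Sylow p G), (↑P : Subgroup G).Normal := by
    intro h
    exact hnil ((tfae.out 3 0).mp h)
  push_neg at h4
  obtain ⟨p, hp, P, hP⟩ := h4
  haveI := hp
  obtain ⟨g, hg⟩ : ∃ g : G, g ∉ Subgroup.normalizer ((P : Subgroup G) : Set G) := by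
    by_contra h
    push_neg at h
    exact hP (Subgroup.normalizer_eq_top_iff.mp ((Subgroup.eq_top_iff' _).mpr h))
  set Q : Sylow p G := g • P with hQdef
  have hQP : (Q : Subgroup G) ≠ (P : Subgroup G) := by
    intro h
    exact hg (Sylow.smul_eq_iff_mem_normalizer.mp (Sylow.ext h))
  obtain ⟨k, hk⟩ := IsPGroup.iff_card.mp P.isPGroup'
  have hcard : Nat.card (Q : Subgroup G) = Nat.card (P : Subgroup G) := by
    rw [Q.card_eq_multiplicity, P.card_eq_multiplicity]
  have hcP : Nat.card (P : Subgroup G) ≠ 0 := Nat.card_pos.ne'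
  have hindex : (Q : Subgroup G).index = (P : Subgroup G).index := by
    have h1 := ((Q : Subgroup G)).card_mul_index
    have h2 := ((P : Subgroup G)).card_mul_index
    rw [hcard] at h1
    exact Nat.eq_of_mul_eq_mul_left (Nat.pos_of_ne_zero hcP) (h1.trans h2.symm)
  have hnd : ¬ p ∣ (P : Subgroup G).index := by
    haveI : (P : Subgroup G).FiniteIndex := ⟨Subgroup.index_ne_zero_of_finite⟩
    exact P.not_dvd_index
  -- p divides the index of P ⊓ Q
  have hpdvd : p ∣ ((P : Subgroup G) ⊓ Q).index := by
    have hle : (P : Subgroup G) ⊓ Q ≤ P := inf_le_left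
    have hmul := Subgroup.relIndex_mul_index hle
    have hr1 : ((P : Subgroup G) ⊓ Q).relIndex P ≠ 1 := by
      rw [Ne, Subgroup.relIndex_eq_one]
      intro h
      exact hQP (P.3 Q.isPGroup' (le_trans h inf_le_right))
    have hrdvd : ((P : Subgroup G) ⊓ Q).relIndex P ∣ p ^ k := by
      rw [← hk]
      exact Subgroup.index_dvd_card _
    obtain ⟨j, hjk, hj⟩ := (Nat.dvd_prime_pow hp.out).mp hrdvd
    have hj0 : j ≠ 0 := by
      rintro rfl
      rw [pow_zero] at hj
      exact hr1 hj
    have : p ∣ ((P : Subgroup G) ⊓ Q).relIndex P := by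
      rw [hj]
      exact dvd_pow_self p hj0
    exact hmul ▸ dvd_mul_of_dvd_left this _
  refine ⟨fun i => if i = (⟨0, by omega⟩ : Fin n) then (P : Subgroup G) else (Q : Subgroup G), ?_⟩
  intro A hA hfin As h
  letI := hA
  letI := hfin
  set i0 : Fin n := ⟨0, by omega⟩ with hi0
  set i1 : Fin n := ⟨1, by omega⟩ with hi1
  have hi : i1 ≠ i0 := by simp [hi0, hi1, Fin.ext_iff]
  have e0 := h {i0} ⟨i0, Finset.mem_singleton_self i0⟩
  have e1 := h {i1} ⟨i1, Finset.mem_singleton_self i1⟩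
  have e01 := h {i0, i1} ⟨i0, by simp⟩
  rw [Finset.iInf_singleton, Finset.iInf_singleton, if_pos rfl] at e0
  rw [Finset.iInf_singleton, Finset.iInf_singleton, if_neg hi] at e1
  rw [Finset.iInf_insert, Finset.iInf_singleton, Finset.iInf_insert, Finset.iInf_singleton,
    if_pos rfl, if_neg hi] at e01
  -- abelian divisibility
  have hA01 : (As i0 ⊓ As i1).index ∣ (As i0).index * (As i1).index := by
    have hmul := Subgroup.relIndex_mul_index (inf_le_right : As i0 ⊓ As i1 ≤ As i1)
    rw [Subgroup.inf_relIndex_right] at hmul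
    exact hmul ▸ Nat.mul_dvd_mul_right (Subgroup.relIndex_dvd_index_of_normal _ _) _
  rw [← e01, ← e0, ← e1, hindex] at hA01
  have : p ∣ (P : Subgroup G).index * (P : Subgroup G).index := hpdvd.trans hA01
  exact hnd ((Nat.Prime.dvd_mul hp.out).mp this |>.elim id id)
end

section
/- A finite group G is abelian group representable for n = 2 if and only if G is nilpotent. That is: the following are equivalent for a finite group G: (1) for every pair of subgroups G_1, G_2 of G there exists a finite abelian group A with subgroups A_1, A_2 such that [G : G_1] = [A : A_1], [G : G_2] = [A : A_2], and [G : G_1 ∩ G_2] = [A : A_1 ∩ A_2]; (2) G is nilpotent. -/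
open Subgroup

/-- In a commutative group, the index of an intersection divides the product of indices. -/
lemma aux_abelian_dvd {A : Type*} [CommGroup A] (A1 A2 : Subgroup A) :
    (A1 ⊓ A2).index ∣ A1.index * A2.index := by
  have h1 : (A1 ⊓ A2).relIndex A1 * A1.index = (A1 ⊓ A2).index :=
    Subgroup.relIndex_mul_index inf_le_left
  rw [← h1, Subgroup.inf_relIndex_left, mul_comm]
  exact Nat.mul_dvd_mul dvd_rfl (Subgroup.relIndex_dvd_index_of_normal A2 A1)

/-- With a normal Sylow-like subgroup `P`, the `p`-part of any index is the relIndex in `P`. -/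
lemma aux_key {G : Type} [Group G] [Fintype G] (p : ℕ) [hp : Fact p.Prime]
    (P : Subgroup G) (hnorm : P.Normal) (hP : IsPGroup p P) (hp' : ¬ p ∣ P.index)
    (H : Subgroup G) :
    p ^ (H.index.factorization p) = H.relIndex P := by
  haveI := hnorm
  obtain ⟨n, hn⟩ := hP.index (H.subgroupOf P)
  have hn' : H.relIndex P = p ^ n := hn
  have e1 : (H ⊓ P).relIndex H * H.index = (H ⊓ P).index :=
    Subgroup.relIndex_mul_index inf_le_left
  have e2 : (H ⊓ P).relIndex P * P.index = (H ⊓ P).index :=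
    Subgroup.relIndex_mul_index inf_le_right
  rw [Subgroup.inf_relIndex_left] at e1
  rw [Subgroup.inf_relIndex_right] at e2
  have heq : P.relIndex H * H.index = H.relIndex P * P.index := e1.trans e2.symm
  have hs : ¬ p ∣ P.relIndex H :=
    fun hd => hp' (hd.trans (Subgroup.relIndex_dvd_index_of_normal P H))
  have hHne : H.index ≠ 0 := Subgroup.index_ne_zero_of_finite
  have hPne : P.index ≠ 0 := Subgroup.index_ne_zero_of_finite
  have hsne : P.relIndex H ≠ 0 := Subgroup.index_ne_zero_of_finite
  have hrne : H.relIndex P ≠ 0 := Subgroup.index_ne_zero_of_finite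
  have hfact : (P.relIndex H * H.index).factorization p
      = (H.relIndex P * P.index).factorization p := by rw [heq]
  rw [Nat.factorization_mul hsne hHne, Nat.factorization_mul hrne hPne] at hfact
  simp only [Finsupp.add_apply] at hfact
  rw [Nat.factorization_eq_zero_of_not_dvd hs, Nat.factorization_eq_zero_of_not_dvd hp',
    zero_add, add_zero, hn', Nat.Prime.factorization_pow hp.out,
    Finsupp.single_eq_same] at hfact
  rw [hfact, hn']

set_option maxHeartbeats 1000000 in
/-- In a finite nilpotent group, the index of an intersection divides the product of indices. -/
lemma aux_nilpotent_dvd {G : Type} [Group G] [Fintype G] (h : Group.IsNilpotent G)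
    (H K : Subgroup G) : (H ⊓ K).index ∣ H.index * K.index := by
  have hnorm : ∀ (p : ℕ) (_hp : Fact p.Prime) (P : Sylow p G), (↑P : Subgroup G).Normal :=
    ((isNilpotent_of_finite_tfae (G := G)).out 0 3).mp h
  have hHne : H.index ≠ 0 := Subgroup.index_ne_zero_of_finite
  have hKne : K.index ≠ 0 := Subgroup.index_ne_zero_of_finite
  have hcne : (H ⊓ K).index ≠ 0 := Subgroup.index_ne_zero_of_finite
  rw [← Nat.factorization_le_iff_dvd hcne (mul_ne_zero hHne hKne), Finsupp.le_def]
  intro p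
  by_cases hpp : p.Prime
  · haveI hfact : Fact p.Prime := ⟨hpp⟩
    obtain ⟨P⟩ : Nonempty (Sylow p G) := inferInstance
    have hpg := P.isPGroup'
    have hn : (↑P : Subgroup G).Normal := hnorm p hfact P
    haveI := hn
    have hp' : ¬ p ∣ (↑P : Subgroup G).index := P.not_dvd_index
    have kH := @aux_key G _ _ p hfact (↑P) hn hpg hp' H
    have kK := @aux_key G _ _ p hfact (↑P) hn hpg hp' K
    have kC := @aux_key G _ _ p hfact (↑P) hn hpg hp' (H ⊓ K)
    have hle : (H ⊓ K).relIndex ↑P ≤ H.relIndex ↑P * K.relIndex ↑P :=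
      Subgroup.relIndex_inf_le
    rw [← kH, ← kK, ← kC, ← pow_add] at hle
    have hexp : (H ⊓ K).index.factorization p
        ≤ H.index.factorization p + K.index.factorization p :=
      (Nat.pow_le_pow_iff_right hpp.one_lt).mp hle
    rw [Nat.factorization_mul hHne hKne]
    simpa using hexp
  · simp [Nat.factorization_eq_zero_of_not_prime _ hpp]

lemma aux_prod_inf (M N P : Type) [CommGroup M] [CommGroup N] [CommGroup P] :
    ((⊥ : Subgroup M).prod ((⊤ : Subgroup N).prod (⊥ : Subgroup P))) ⊓
    ((⊤ : Subgroup M).prod ((⊥ : Subgroup N).prod (⊥ : Subgroup P))) = ⊥ := by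
  ext ⟨x, y, z⟩
  simp [Subgroup.mem_prod, Prod.ext_iff]
  tauto

/-- Construction of an abelian group realizing a compatible index triple. -/
lemma aux_construct (a b c : ℕ) (ha : a ≠ 0) (hb : b ≠ 0) (hc : c ≠ 0)
    (hac : a ∣ c) (hbc : b ∣ c) (hcab : c ∣ a * b) :
    ∃ (A : Type) (_ : CommGroup A) (_ : Fintype A) (A1 A2 : Subgroup A),
      a = A1.index ∧ b = A2.index ∧ c = (A1 ⊓ A2).index := by
  have hcb : c / b ≠ 0 := by
    exact Nat.div_ne_zero_iff.mpr ⟨hb, Nat.le_of_dvd (Nat.pos_of_ne_zero hc) hbc⟩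
  have hca : c / a ≠ 0 := by
    exact Nat.div_ne_zero_iff.mpr ⟨ha, Nat.le_of_dvd (Nat.pos_of_ne_zero hc) hac⟩
  have habc : a * b / c ≠ 0 := by
    exact Nat.div_ne_zero_iff.mpr ⟨hc, Nat.le_of_dvd (Nat.pos_of_ne_zero (mul_ne_zero ha hb)) hcab⟩
  have hkey1 : c / b * (a * b / c) = a := by
    rw [Nat.div_mul_div_comm hbc hcab]
    have : c * (a * b) = a * (b * c) := by ring
    rw [this, Nat.mul_div_cancel _ (Nat.pos_of_ne_zero (mul_ne_zero hb hc))]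
  have hkey2 : c / a * (a * b / c) = b := by
    rw [Nat.div_mul_div_comm hac hcab]
    have : c * (a * b) = b * (a * c) := by ring
    rw [this, Nat.mul_div_cancel _ (Nat.pos_of_ne_zero (mul_ne_zero ha hc))]
  haveI : NeZero (c / b) := ⟨hcb⟩
  haveI : NeZero (c / a) := ⟨hca⟩
  haveI : NeZero (a * b / c) := ⟨habc⟩
  refine ⟨Multiplicative (ZMod (c / b)) ×
      (Multiplicative (ZMod (c / a)) × Multiplicative (ZMod (a * b / c))),
    inferInstance, inferInstance,
    (⊥ : Subgroup (Multiplicative (ZMod (c / b)))).prod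
      ((⊤ : Subgroup (Multiplicative (ZMod (c / a)))).prod ⊥),
    (⊤ : Subgroup (Multiplicative (ZMod (c / b)))).prod
      ((⊥ : Subgroup (Multiplicative (ZMod (c / a)))).prod ⊥), ?_, ?_, ?_⟩
  · rw [Subgroup.index_prod, Subgroup.index_prod, Subgroup.index_bot, Subgroup.index_bot,
      Subgroup.index_top]
    have e1 : Nat.card (Multiplicative (ZMod (c / b))) = c / b := by simp
    have e3 : Nat.card (Multiplicative (ZMod (a * b / c))) = a * b / c := by simp
    rw [e1, e3, one_mul]
    exact hkey1.symm
  · rw [Subgroup.index_prod, Subgroup.index_prod, Subgroup.index_bot, Subgroup.index_bot,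
      Subgroup.index_top]
    have e2 : Nat.card (Multiplicative (ZMod (c / a))) = c / a := by simp
    have e3 : Nat.card (Multiplicative (ZMod (a * b / c))) = a * b / c := by simp
    rw [e2, e3, one_mul]
    exact hkey2.symm
  · rw [aux_prod_inf, Subgroup.index_bot, Nat.card_prod, Nat.card_prod]
    have e1 : Nat.card (Multiplicative (ZMod (c / b))) = c / b := by simp
    have e2 : Nat.card (Multiplicative (ZMod (c / a))) = c / a := by simp
    have e3 : Nat.card (Multiplicative (ZMod (a * b / c))) = a * b / c := by simp
    rw [e1, e2, e3, hkey2, Nat.div_mul_cancel hbc]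

theorem stmt_18 (G : Type) [Group G] [Fintype G] :
    (∀ G1 G2 : Subgroup G,
      ∃ (A : Type) (_ : CommGroup A) (_ : Fintype A) (A1 A2 : Subgroup A),
        G1.index = A1.index ∧ G2.index = A2.index ∧
          (G1 ⊓ G2).index = (A1 ⊓ A2).index) ↔
    Group.IsNilpotent G := by
  constructor
  · intro h
    refine ((isNilpotent_of_finite_tfae (G := G)).out 3 0).mp ?_
    intro p hp P
    have hdvd : ∀ H K : Subgroup G, (H ⊓ K).index ∣ H.index * K.index := by
      intro H K
      obtain ⟨A, _, _, A1, A2, h1, h2, h3⟩ := h H K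
      rw [h1, h2, h3]
      exact aux_abelian_dvd A1 A2
    constructor
    intro n hn g
    set K : Subgroup G := (↑P : Subgroup G).comap (MulAut.conj g).toMonoidHom with hK
    have hKP : K.index = (↑P : Subgroup G).index :=
      Subgroup.index_comap_of_surjective _ (MulAut.conj g).surjective
    have hle : (↑P : Subgroup G) ≤ K := by
      obtain ⟨m, hm⟩ := P.isPGroup'.index (K.subgroupOf (↑P : Subgroup G))
      have hm' : K.relIndex ↑P = p ^ m := hm
      have e : (↑P ⊓ K : Subgroup G).relIndex ↑P * (↑P : Subgroup G).index
          = (↑P ⊓ K : Subgroup G).index := Subgroup.relIndex_mul_index inf_le_left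
      rw [Subgroup.inf_relIndex_left, hm'] at e
      have hd := hdvd ↑P K
      rw [← e, hKP] at hd
      rw [mul_comm ((↑P : Subgroup G).index)] at hd
      have hPne : (↑P : Subgroup G).index ≠ 0 := Subgroup.index_ne_zero_of_finite
      have hd' : p ^ m ∣ (↑P : Subgroup G).index :=
        (Nat.mul_dvd_mul_iff_right (Nat.pos_of_ne_zero hPne)).mp hd
      have hm0 : m = 0 := by
        by_contra hm0
        exact P.not_dvd_index ((dvd_pow_self p hm0).trans hd')
      rw [hm0, pow_zero] at hm'
      exact Subgroup.relIndex_eq_one.mp hm'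
    have := hle hn
    rw [hK, Subgroup.mem_comap] at this
    simpa using this
  · intro h G1 G2
    obtain ⟨A, hCG, hF, A1, A2, h1, h2, h3⟩ :=
      aux_construct G1.index G2.index (G1 ⊓ G2).index
        Subgroup.index_ne_zero_of_finite Subgroup.index_ne_zero_of_finite
        Subgroup.index_ne_zero_of_finite
        (Subgroup.index_dvd_of_le inf_le_left) (Subgroup.index_dvd_of_le inf_le_right)
        (aux_nilpotent_dvd h G1 G2)
    exact ⟨A, hCG, hF, A1, A2, h1, h2, h3⟩
end

section
/- Let m ≥ 3 and suppose m is not a power of 2. Then for every n ≥ 2, neither the dihedral group DihedralGroup m nor the dicyclic group QuaternionGroup m is abelian group representable for n. -/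
/-! ### Auxiliary lemmas -/

lemma comm_index_inf_dvd {A : Type*} [CommGroup A] (H K : Subgroup A) :
    (H ⊓ K).index ∣ H.index * K.index := by
  have h1 : (H ⊓ K).relIndex K * K.index = (H ⊓ K).index :=
    Subgroup.relIndex_mul_index inf_le_right
  rw [Subgroup.inf_relIndex_right] at h1
  have h3 : H.relIndex K ∣ H.index := Subgroup.relIndex_dvd_index_of_normal H K
  calc (H ⊓ K).index = H.relIndex K * K.index := h1.symm
    _ ∣ H.index * K.index := mul_dvd_mul h3 dvd_rfl

lemma not_abrep {G : Type} [Group G] {n : ℕ} (hn : 2 ≤ n) {q : ℕ} (hq : ¬ 2 ∣ q)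
    (H1 H2 : Subgroup G) (h1 : H1.index = q) (h2 : H2.index = q)
    (h12 : (H1 ⊓ H2).index = 2 * q) :
    ¬ AbelianGroupRepresentable G n := by
  intro h
  set i0 : Fin n := ⟨0, by omega⟩ with hi0
  set i1 : Fin n := ⟨1, by omega⟩ with hi1
  have hne : i0 ≠ i1 := by simp [hi0, hi1, Fin.ext_iff]
  obtain ⟨A, hA, hF, As, hrep⟩ := h (fun i => if i = i0 then H1 else H2)
  letI := hA
  have e0 := hrep {i0} ⟨i0, Finset.mem_singleton_self i0⟩
  have e1 := hrep {i1} ⟨i1, Finset.mem_singleton_self i1⟩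
  have e01 := hrep {i0, i1} ⟨i0, by simp⟩
  rw [Finset.iInf_singleton, Finset.iInf_singleton] at e0 e1
  rw [Finset.iInf_insert, Finset.iInf_singleton, Finset.iInf_insert,
    Finset.iInf_singleton] at e01
  simp only [if_pos rfl, if_neg hne.symm, if_true] at e0 e1 e01
  have hdvd : (As i0 ⊓ As i1).index ∣ (As i0).index * (As i1).index :=
    comm_index_inf_dvd _ _
  rw [← e0, ← e1, ← e01, h1, h2, h12] at hdvd
  apply hq
  have h2q : 2 ∣ q * q := dvd_trans ⟨q, rfl⟩ hdvd
  exact (Nat.Prime.dvd_mul Nat.prime_two).mp h2q |>.elim id id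

lemma index_eq_of_card {G : Type*} [Group G] (H : Subgroup G) (k d : ℕ)
    (hG : Nat.card G = k * d) (hH : Nat.card H = k) (hk : 0 < k) : H.index = d := by
  have := Subgroup.card_mul_index H
  rw [hH, hG] at this
  exact Nat.eq_of_mul_eq_mul_left hk this

lemma one_not_mem_zmultiples (N q : ℕ) (hN : N ≠ 0) (hq1 : q ≠ 1) (hqN : q ∣ N) :
    (1 : ZMod N) ∉ AddSubgroup.zmultiples ((q : ZMod N)) := by
  haveI : NeZero N := ⟨hN⟩
  intro h
  rw [AddSubgroup.mem_zmultiples_iff] at h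
  obtain ⟨k, hk⟩ := h
  rw [zsmul_eq_mul] at hk
  have hu : IsUnit ((q : ℕ) : ZMod N) :=
    IsUnit.of_mul_eq_one ((k : ℤ) : ZMod N) (by rw [mul_comm]; exact hk)
  have hcop : Nat.Coprime q N := (ZMod.isUnit_iff_coprime q N).mp hu
  exact hq1 (Nat.eq_one_of_dvd_one (hcop ▸ Nat.dvd_gcd dvd_rfl hqN))

lemma card_zmultiples_nat (N q : ℕ) (hN : N ≠ 0) (hqN : q ∣ N) :
    Nat.card (AddSubgroup.zmultiples ((q : ZMod N))) = N / q := by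
  rw [Nat.card_zmultiples, ZMod.addOrderOf_coe q hN, Nat.gcd_eq_right hqN]

lemma m_mem_zmultiples (m q : ℕ) (hqm : q ∣ m) :
    ((m : ZMod (2 * m))) ∈ AddSubgroup.zmultiples ((q : ZMod (2 * m))) := by
  rw [AddSubgroup.mem_zmultiples_iff]
  refine ⟨((m / q : ℕ) : ℤ), ?_⟩
  rw [zsmul_eq_mul, Int.cast_natCast, ← Nat.cast_mul, Nat.div_mul_cancel hqm]

/-! ### Dihedral subgroups -/

open DihedralGroup in
/-- subgroup of dihedral group: rotations in `z`, reflections in coset `c + z`. -/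
def dSub (m : ℕ) (z : AddSubgroup (ZMod m)) (c : ZMod m) : Subgroup (DihedralGroup m) where
  carrier := {x | match x with
    | .r i => i ∈ z
    | .sr i => i - c ∈ z}
  one_mem' := z.zero_mem
  mul_mem' := by
    rintro (i | i) (j | j) hi hj
    · exact z.add_mem hi hj
    · show j - i - c ∈ z
      rw [sub_right_comm]; exact z.sub_mem hj hi
    · show i + j - c ∈ z
      rw [← sub_add_eq_add_sub]; exact z.add_mem hi hj
    · show j - i ∈ z
      have := z.sub_mem hj hi
      rwa [sub_sub_sub_cancel_right] at this
  inv_mem' := by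
    rintro (i | i) hi
    · exact z.neg_mem hi
    · exact hi

open DihedralGroup in
/-- subgroup of dihedral group: rotations in `z` only. -/
def dSubR (m : ℕ) (z : AddSubgroup (ZMod m)) : Subgroup (DihedralGroup m) where
  carrier := {x | match x with
    | .r i => i ∈ z
    | .sr _ => False}
  one_mem' := z.zero_mem
  mul_mem' := by
    rintro (i | i) (j | j) hi hj
    · exact z.add_mem hi hj
    · exact hj.elim
    · exact hi.elim
    · exact hi.elim
  inv_mem' := by
    rintro (i | i) hi
    · exact z.neg_mem hi
    · exact hi.elim

open DihedralGroup in
def dSubEquiv (m : ℕ) (z : AddSubgroup (ZMod m)) (c : ZMod m) :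
    (z ⊕ z) ≃ (dSub m z c) where
  toFun x := match x with
    | Sum.inl i => ⟨r i, i.2⟩
    | Sum.inr i => ⟨sr ((i : ZMod m) + c), by show (i : ZMod m) + c - c ∈ z; simpa using i.2⟩
  invFun x := match x with
    | ⟨r i, h⟩ => Sum.inl ⟨i, h⟩
    | ⟨sr i, h⟩ => Sum.inr ⟨i - c, h⟩
  left_inv := by rintro (⟨i, hi⟩ | ⟨i, hi⟩) <;> simp
  right_inv := by rintro ⟨(i | i), h⟩ <;> simp

open DihedralGroup in
def dSubREquiv (m : ℕ) (z : AddSubgroup (ZMod m)) : z ≃ (dSubR m z) where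
  toFun i := ⟨r i, i.2⟩
  invFun x := match x with
    | ⟨r i, h⟩ => ⟨i, h⟩
    | ⟨sr i, h⟩ => h.elim
  left_inv := by rintro ⟨i, hi⟩; rfl
  right_inv := by
    rintro ⟨(i | i), h⟩
    · rfl
    · exact h.elim

lemma dInf (m : ℕ) (z : AddSubgroup (ZMod m)) (h1 : (1 : ZMod m) ∉ z) :
    dSub m z 0 ⊓ dSub m z 1 = dSubR m z := by
  ext x
  rw [Subgroup.mem_inf]
  rcases x with i | i
  · show (i ∈ z ∧ i ∈ z) ↔ i ∈ z
    tauto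
  · show (i - 0 ∈ z ∧ i - 1 ∈ z) ↔ False
    simp only [iff_false, not_and]
    intro h0 hone
    apply h1
    have := z.sub_mem h0 hone
    simpa using this

/-! ### Quaternion (dicyclic) subgroups -/

open QuaternionGroup in
/-- subgroup of quaternion group: `a i` with `i ∈ z`, `xa i` with `i ∈ c + z`. -/
def qSub (m : ℕ) (z : AddSubgroup (ZMod (2 * m))) (hm : ((m : ZMod (2 * m))) ∈ z)
    (c : ZMod (2 * m)) : Subgroup (QuaternionGroup m) where
  carrier := {x | match x with
    | .a i => i ∈ z
    | .xa i => i - c ∈ z}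
  one_mem' := z.zero_mem
  mul_mem' := by
    rintro (i | i) (j | j) hi hj
    · exact z.add_mem hi hj
    · show j - i - c ∈ z
      rw [sub_right_comm]; exact z.sub_mem hj hi
    · show i + j - c ∈ z
      rw [← sub_add_eq_add_sub]; exact z.add_mem hi hj
    · show (m : ZMod (2 * m)) + j - i ∈ z
      have key : (m : ZMod (2 * m)) + j - i = (m : ZMod (2 * m)) + (j - c - (i - c)) := by ring
      rw [key]
      exact z.add_mem hm (z.sub_mem hj hi)
  inv_mem' := by
    rintro (i | i) hi
    · exact z.neg_mem hi
    · show (m : ZMod (2 * m)) + i - c ∈ z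
      have key : (m : ZMod (2 * m)) + i - c = (m : ZMod (2 * m)) + (i - c) := by ring
      rw [key]
      exact z.add_mem hm hi

open QuaternionGroup in
def qSubA (m : ℕ) (z : AddSubgroup (ZMod (2 * m))) : Subgroup (QuaternionGroup m) where
  carrier := {x | match x with
    | .a i => i ∈ z
    | .xa _ => False}
  one_mem' := z.zero_mem
  mul_mem' := by
    rintro (i | i) (j | j) hi hj
    · exact z.add_mem hi hj
    · exact hj.elim
    · exact hi.elim
    · exact hi.elim
  inv_mem' := by
    rintro (i | i) hi
    · exact z.neg_mem hi
    · exact hi.elim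

open QuaternionGroup in
def qSubEquiv (m : ℕ) (z : AddSubgroup (ZMod (2 * m))) (hm : ((m : ZMod (2 * m))) ∈ z)
    (c : ZMod (2 * m)) : (z ⊕ z) ≃ (qSub m z hm c) where
  toFun x := match x with
    | Sum.inl i => ⟨a i, i.2⟩
    | Sum.inr i => ⟨xa ((i : ZMod (2 * m)) + c), by
        show (i : ZMod (2 * m)) + c - c ∈ z; simpa using i.2⟩
  invFun x := match x with
    | ⟨a i, h⟩ => Sum.inl ⟨i, h⟩
    | ⟨xa i, h⟩ => Sum.inr ⟨i - c, h⟩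
  left_inv := by rintro (⟨i, hi⟩ | ⟨i, hi⟩) <;> simp
  right_inv := by rintro ⟨(i | i), h⟩ <;> simp

open QuaternionGroup in
def qSubAEquiv (m : ℕ) (z : AddSubgroup (ZMod (2 * m))) : z ≃ (qSubA m z) where
  toFun i := ⟨a i, i.2⟩
  invFun x := match x with
    | ⟨a i, h⟩ => ⟨i, h⟩
    | ⟨xa i, h⟩ => h.elim
  left_inv := by rintro ⟨i, hi⟩; rfl
  right_inv := by
    rintro ⟨(i | i), h⟩
    · rfl
    · exact h.elim

lemma qInf (m : ℕ) (z : AddSubgroup (ZMod (2 * m))) (hm : ((m : ZMod (2 * m))) ∈ z)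
    (h1 : (1 : ZMod (2 * m)) ∉ z) :
    qSub m z hm 0 ⊓ qSub m z hm 1 = qSubA m z := by
  ext x
  rw [Subgroup.mem_inf]
  rcases x with i | i
  · show (i ∈ z ∧ i ∈ z) ↔ i ∈ z
    tauto
  · show (i - 0 ∈ z ∧ i - 1 ∈ z) ↔ False
    simp only [iff_false, not_and]
    intro h0 hone
    apply h1
    have := z.sub_mem h0 hone
    simpa using this

theorem stmt_19 (m : ℕ) (hm : 3 ≤ m) (hpow : ¬ ∃ t : ℕ, m = 2 ^ t)
    (n : ℕ) (hn : 2 ≤ n) :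
    ¬ AbelianGroupRepresentable (DihedralGroup m) n ∧
    ¬ AbelianGroupRepresentable (QuaternionGroup m) n := by
  have hm0 : m ≠ 0 := by omega
  haveI : NeZero m := ⟨hm0⟩
  set q : ℕ := ordCompl[2] m with hqdef
  have hq_dvd : q ∣ m := Nat.ordCompl_dvd m 2
  have hq_odd : ¬ 2 ∣ q := Nat.not_dvd_ordCompl Nat.prime_two hm0
  have hq_pos : 0 < q := Nat.ordCompl_pos 2 hm0
  have hq_ne1 : q ≠ 1 := by
    intro h
    refine hpow ⟨m.factorization 2, ?_⟩
    have h2 := Nat.ordProj_mul_ordCompl_eq_self m 2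
    rw [← hqdef, h, mul_one] at h2
    omega
  obtain ⟨s, hs⟩ := hq_dvd
  have hq_dvd : q ∣ m := ⟨s, hs⟩
  have hs_pos : 0 < s := by
    rcases Nat.eq_zero_or_pos s with h | h
    · rw [h, mul_zero] at hs; omega
    · exact h
  constructor
  · -- dihedral case
    set z := AddSubgroup.zmultiples ((q : ZMod m)) with hz
    have hcz : Nat.card z = s := by
      rw [card_zmultiples_nat m q hm0 hq_dvd, hs, Nat.mul_div_cancel_left s hq_pos]
    have h1z : (1 : ZMod m) ∉ z := one_not_mem_zmultiples m q hm0 hq_ne1 hq_dvd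
    have hcardG : Nat.card (DihedralGroup m) = 2 * m := DihedralGroup.nat_card
    have hidx : ∀ c : ZMod m, (dSub m z c).index = q := by
      intro c
      apply index_eq_of_card _ (s + s) q
      · rw [hcardG, hs]; ring
      · rw [Nat.card_congr (dSubEquiv m z c).symm, Nat.card_sum, hcz]
      · omega
    have hidxR : (dSubR m z).index = 2 * q := by
      apply index_eq_of_card _ s (2 * q)
      · rw [hcardG, hs]; ring
      · rw [Nat.card_congr (dSubREquiv m z).symm, hcz]
      · omega
    exact not_abrep hn hq_odd (dSub m z 0) (dSub m z 1) (hidx 0) (hidx 1)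
      (by rw [dInf m z h1z, hidxR])
  · -- quaternion case
    set z := AddSubgroup.zmultiples ((q : ZMod (2 * m))) with hz
    have h2m0 : (2 * m) ≠ 0 := by omega
    have hq2m : q ∣ 2 * m := hq_dvd.mul_left 2
    have hmem : ((m : ZMod (2 * m))) ∈ z := m_mem_zmultiples m q hq_dvd
    have hcz : Nat.card z = 2 * s := by
      rw [card_zmultiples_nat (2 * m) q h2m0 hq2m, hs,
        show 2 * (q * s) = q * (2 * s) by ring, Nat.mul_div_cancel_left _ hq_pos]
    have h1z : (1 : ZMod (2 * m)) ∉ z := one_not_mem_zmultiples (2 * m) q h2m0 hq_ne1 hq2m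
    have hcardG : Nat.card (QuaternionGroup m) = 4 * m := by
      rw [Nat.card_eq_fintype_card, QuaternionGroup.card]
    have hidx : ∀ c : ZMod (2 * m), (qSub m z hmem c).index = q := by
      intro c
      apply index_eq_of_card _ (2 * s + 2 * s) q
      · rw [hcardG, hs]; ring
      · rw [Nat.card_congr (qSubEquiv m z hmem c).symm, Nat.card_sum, hcz]
      · omega
    have hidxA : (qSubA m z).index = 2 * q := by
      apply index_eq_of_card _ (2 * s) (2 * q)
      · rw [hcardG, hs]; ring
      · rw [Nat.card_congr (qSubAEquiv m z).symm, hcz]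
      · omega
    exact not_abrep hn hq_odd (qSub m z hmem 0) (qSub m z hmem 1) (hidx 0) (hidx 1)
      (by rw [qInf m z hmem h1z, hidxA])
end
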